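/- arXiv:2107.12961 — 7 statements merged into one kernel-verified Lean document; each statement's English description precedes it below -/
import Mathlib

section
/- Let k be a field, n ≥ 1, and let A, B be n×n matrices over k. Then there exists an n×n matrix C over k such that the matrix C(1 − AB) + B is invertible, where 1 denotes the n×n identity matrix. -/
open Submodule LinearMap

theorem key {k V : Type*} [Field k] [AddCommGroup V] [Module k V] [FiniteDimensional k V]
    (f g : V →ₗ[k] V) (h : ∀ x, f x = 0 → g x = 0 → x = 0) :
    ∃ c : V →ₗ[k] V, Function.Bijective (c ∘ₗ f + g) := by
  set K := LinearMap.ker f with hK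
  obtain ⟨W, hW⟩ := K.exists_isCompl
  -- f is injective on W
  have hfW : Function.Injective (f.domRestrict W) := by
    rw [← LinearMap.ker_eq_bot, LinearMap.ker_domRestrict, eq_bot_iff]
    rintro ⟨x, hxW⟩ hx
    simp only [Submodule.mem_comap, Submodule.coe_subtype, LinearMap.mem_ker] at hx
    have : x ∈ K ⊓ W := ⟨hx, hxW⟩
    rw [hW.inf_eq_bot] at this
    exact Subtype.ext ((Submodule.mem_bot k).mp this)
  -- g is injective on K
  have hgK : Function.Injective (g.domRestrict K) := by
    rw [← LinearMap.ker_eq_bot, LinearMap.ker_domRestrict, eq_bot_iff]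
    rintro ⟨x, hxK⟩ hx
    simp only [Submodule.mem_comap, Submodule.coe_subtype, LinearMap.mem_ker] at hx
    exact Subtype.ext (h x hxK hx)
  set fW := W.map f with hfWdef
  set gK := K.map g with hgKdef
  obtain ⟨U, hU⟩ := gK.exists_isCompl
  obtain ⟨W', hW'⟩ := fW.exists_isCompl
  -- dimension count
  set e1 : (W : Submodule k V) ≃ₗ[k] fW :=
    (LinearEquiv.ofInjective (f.domRestrict W) hfW).trans
      (LinearEquiv.ofEq _ _ (LinearMap.range_domRestrict W f)) with he1def
  have e2 : (K : Submodule k V) ≃ₗ[k] gK := by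
    refine (LinearEquiv.ofInjective (g.domRestrict K) hgK).trans (LinearEquiv.ofEq _ _ ?_)
    exact LinearMap.range_domRestrict K g
  have hdim : Module.finrank k fW = Module.finrank k U := by
    have h1 := Submodule.finrank_add_eq_of_isCompl hW
    have h2 := Submodule.finrank_add_eq_of_isCompl hU
    have := e1.finrank_eq
    have := e2.finrank_eq
    omega
  obtain ⟨ψ⟩ := FiniteDimensional.nonempty_linearEquiv_of_finrank_eq hdim
  set p : V →ₗ[k] fW := fW.projectionOnto W' hW' with hp
  set c : V →ₗ[k] V :=
    (U.subtype ∘ₗ ψ.toLinearMap - g ∘ₗ W.subtype ∘ₗ e1.symm.toLinearMap) ∘ₗ p with hc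
  refine ⟨c, ?_⟩
  have he1 : ∀ x : W, ((e1 x : fW) : V) = f x := by
    intro x
    simp [he1def, LinearEquiv.trans_apply]
  -- main computation
  have hmain : ∀ w : V, ∀ hw : w ∈ W, (c ∘ₗ f + g) w =
      (ψ (⟨f w, Submodule.mem_map_of_mem hw⟩ : fW) : V) := by
    intro w hw
    have hfwmem : f w ∈ fW := Submodule.mem_map_of_mem hw
    have hproj : p (f w) = ⟨f w, hfwmem⟩ := by
      have := Submodule.linearProjOfIsCompl_apply_left hW' (⟨f w, hfwmem⟩ : fW)
      simpa [hp] using this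
    have hsymm : e1.symm ⟨f w, hfwmem⟩ = ⟨w, hw⟩ := by
      rw [LinearEquiv.symm_apply_eq]
      exact Subtype.ext (he1 ⟨w, hw⟩).symm
    have step : (c ∘ₗ f + g) w = c (f w) + g w := rfl
    rw [step, hc]
    simp only [LinearMap.comp_apply, LinearMap.sub_apply, LinearEquiv.coe_coe]
    rw [hproj, hsymm]
    simp only [Submodule.coe_subtype]
    abel
  have hinj : Function.Injective (c ∘ₗ f + g) := by
    rw [← LinearMap.ker_eq_bot, eq_bot_iff]
    intro x hx
    rw [LinearMap.mem_ker] at hx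
    have hxmem : x ∈ K ⊔ W := by rw [hW.sup_eq_top]; trivial
    obtain ⟨v, hv, w, hw, rfl⟩ := Submodule.mem_sup.mp hxmem
    have hfv : f v = 0 := hv
    have hgv : g v ∈ gK := Submodule.mem_map_of_mem hv
    have hcompute : (c ∘ₗ f + g) (v + w) =
        (ψ (⟨f w, Submodule.mem_map_of_mem hw⟩ : fW) : V) + g v := by
      have h1 := hmain w hw
      simp only [LinearMap.add_apply, LinearMap.comp_apply, map_add, hfv, map_zero,
        zero_add] at h1 ⊢
      rw [← h1]
      abel
    rw [hcompute] at hx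
    have hψU : (ψ (⟨f w, Submodule.mem_map_of_mem hw⟩ : fW) : V) ∈ U := (ψ _).2
    have hzero : (ψ (⟨f w, Submodule.mem_map_of_mem hw⟩ : fW) : V) = 0 ∧ g v = 0 := by
      have hmem : (ψ (⟨f w, Submodule.mem_map_of_mem hw⟩ : fW) : V) ∈ gK ⊓ U := by
        constructor
        · have : (ψ (⟨f w, Submodule.mem_map_of_mem hw⟩ : fW) : V) = -(g v) := by
            linear_combination (norm := abel) hx
          rw [this]; exact neg_mem hgv
        · exact hψU
      rw [hU.inf_eq_bot, Submodule.mem_bot] at hmem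
      refine ⟨hmem, ?_⟩
      rw [hmem, zero_add] at hx; exact hx
    have hw0 : w = 0 := by
      have : (⟨f w, Submodule.mem_map_of_mem hw⟩ : fW) = 0 := by
        have := hzero.1
        exact ψ.map_eq_zero_iff.mp (Subtype.ext this)
      have hfw0 : f w = 0 := congrArg Subtype.val this
      have : w ∈ K ⊓ W := ⟨hfw0, hw⟩
      rw [hW.inf_eq_bot, Submodule.mem_bot] at this
      exact this
    have hv0 : v = 0 := h v hfv hzero.2
    rw [hv0, hw0, add_zero, Submodule.mem_bot]
  exact ⟨hinj, (LinearMap.injective_iff_surjective).mp hinj⟩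


/-- **Mather's trick.** For any two `n × n` matrices `A`, `B` over a field `k` (`n ≥ 1`),
there exists a matrix `C` such that `C * (1 - A * B) + B` is invertible. -/
theorem stmt_5 (k : Type*) [Field k] (n : ℕ) (hn : 1 ≤ n)
    (A B : Matrix (Fin n) (Fin n) k) :
    ∃ C : Matrix (Fin n) (Fin n) k, IsUnit (C * (1 - A * B) + B) := by
  set E : Matrix (Fin n) (Fin n) k ≃ₐ[k] ((Fin n → k) →ₗ[k] (Fin n → k)) :=
    Matrix.toLinAlgEquiv' with hE
  have hEapp : ∀ (M : Matrix (Fin n) (Fin n) k) (x : Fin n → k), E M x = M.mulVec x :=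
    fun M x => rfl
  have hker : ∀ x : Fin n → k, E (1 - A * B) x = 0 → E B x = 0 → x = 0 := by
    intro x h1 h2
    have hB : B.mulVec x = 0 := by rw [hEapp] at h2; exact h2
    have h1' : x - (A * B).mulVec x = 0 := by
      rw [hEapp, Matrix.sub_mulVec, Matrix.one_mulVec] at h1; exact h1
    have : (A * B).mulVec x = 0 := by
      rw [← Matrix.mulVec_mulVec, hB, Matrix.mulVec_zero]
    rw [this, sub_zero] at h1'
    exact h1'
  obtain ⟨c, hc⟩ := key (E (1 - A * B)) (E B) hker
  refine ⟨E.symm c, ?_⟩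
  have hcomp : c ∘ₗ E (1 - A * B) + E B = E (E.symm c * (1 - A * B) + B) := by
    rw [map_add, map_mul, AlgEquiv.apply_symm_apply]
    rfl
  have hunit : IsUnit (E (E.symm c * (1 - A * B) + B)) := by
    rw [← hcomp, Module.End.isUnit_iff]
    exact hc
  have := hunit.map E.symm
  rwa [AlgEquiv.symm_apply_apply] at this
end

section
/- Let (R, 𝔪) be a commutative local ring, n ≥ 1, let A, B be n×n matrices over R, and let v, w ∈ Rⁿ be column vectors satisfying A·w = v and B·v = w. Then there exists an invertible n×n matrix D over R such that D·v = w. -/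
open Submodule Module LinearMap

/-- Over a field (or division ring + fin dim), if `ker f ⊓ ker g = ⊥` then for some `h`,
`f + h ∘ g` is bijective. -/
lemma aux_exists_bij {k V : Type*} [Field k] [AddCommGroup V] [Module k V]
    [FiniteDimensional k V] (f g : V →ₗ[k] V) (hfg : ker f ⊓ ker g = ⊥) :
    ∃ h : V →ₗ[k] V, Function.Bijective (f + h ∘ₗ g) := by
  set K := ker f with hK
  set gK := K.map g with hgK
  obtain ⟨U, hU⟩ := Submodule.exists_isCompl gK
  obtain ⟨W, hW⟩ := Submodule.exists_isCompl (range f)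
  -- g is injective on K
  have hinj : Function.Injective (g.domRestrict K) := by
    rw [← LinearMap.ker_eq_bot]
    rw [Submodule.eq_bot_iff]
    rintro ⟨x, hxK⟩ hx
    have hgx : g x = 0 := hx
    have : x ∈ ker f ⊓ ker g := ⟨hxK, hgx⟩
    rw [hfg] at this
    exact Subtype.ext this
  have e1 : K ≃ₗ[k] gK := by
    have := LinearEquiv.ofInjective (g.domRestrict K) hinj
    rw [LinearMap.range_domRestrict] at this
    exact this
  have hdim : finrank k gK = finrank k W := by
    have h1 : finrank k gK = finrank k K := (e1.symm.finrank_eq)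
    have h2 : finrank k (range f) + finrank k K = finrank k V :=
      LinearMap.finrank_range_add_finrank_ker f
    have h3 : finrank k (range f) + finrank k W = finrank k V :=
      Submodule.finrank_add_eq_of_isCompl hW
    omega
  let e : gK ≃ₗ[k] W := LinearEquiv.ofFinrankEq _ _ hdim
  let h : V →ₗ[k] V := W.subtype ∘ₗ (e : gK →ₗ[k] W) ∘ₗ gK.linearProjOfIsCompl U hU
  refine ⟨h, ?_⟩
  suffices hinj2 : Function.Injective ⇑(f + h ∘ₗ g) by
    exact ⟨hinj2, LinearMap.injective_iff_surjective.mp hinj2⟩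
  rw [← LinearMap.ker_eq_bot, Submodule.eq_bot_iff]
  intro x hx
  have hx' : f x + h (g x) = 0 := hx
  have hmemW : h (g x) ∈ W := (e (gK.linearProjOfIsCompl U hU (g x))).2
  have hmemR : f x ∈ range f := ⟨x, rfl⟩
  -- f x = - h (g x) ∈ range f ⊓ W = ⊥
  have hfx0 : f x = 0 ∧ h (g x) = 0 := by
    have hmem : f x ∈ range f ⊓ W := ⟨hmemR, by
      have : f x = -h (g x) := eq_neg_of_add_eq_zero_left hx'
      rw [this]; exact W.neg_mem hmemW⟩
    rw [hW.inf_eq_bot] at hmem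
    constructor
    · exact hmem
    · rw [hmem] at hx'; simpa using hx'
  obtain ⟨hf0, hh0⟩ := hfx0
  have hxK : x ∈ K := hf0
  have hgxgK : g x ∈ gK := ⟨x, hxK, rfl⟩
  -- h (g x) = 0 means e (proj (g x)) = 0, proj (g x) = ⟨g x, _⟩
  have hproj : gK.linearProjOfIsCompl U hU (g x) = ⟨g x, hgxgK⟩ :=
    Submodule.linearProjOfIsCompl_apply_left hU ⟨g x, hgxgK⟩
  have : (e ⟨g x, hgxgK⟩ : V) = 0 := by
    rw [← hproj]
    exact hh0
  have he0 : e ⟨g x, hgxgK⟩ = 0 := Subtype.ext this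
  have : (⟨g x, hgxgK⟩ : gK) = 0 := by
    apply e.injective; rw [he0, map_zero]
  have hgx0 : g x = 0 := congrArg Subtype.val this
  have : x ∈ ker f ⊓ ker g := ⟨hxK, hgx0⟩
  rw [hfg] at this
  exact this

/-- Matrix version over a field. -/
lemma aux_exists_unit {k : Type*} [Field k] (n : ℕ) (A B : Matrix (Fin n) (Fin n) k) :
    ∃ C : Matrix (Fin n) (Fin n) k, IsUnit (B + C * (1 - A * B)) := by
  set f := Matrix.toLin' B
  set g := Matrix.toLin' (1 - A * B)
  have hfg : ker f ⊓ ker g = ⊥ := by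
    rw [Submodule.eq_bot_iff]
    rintro x ⟨hxf, hxg⟩
    have h1 : B.mulVec x = 0 := by rw [← Matrix.toLin'_apply]; exact hxf
    have h2 : (1 - A * B).mulVec x = 0 := by rw [← Matrix.toLin'_apply]; exact hxg
    have : x - (A * B).mulVec x = 0 := by
      rwa [Matrix.sub_mulVec, Matrix.one_mulVec] at h2
    have h3 : x = (A * B).mulVec x := by
      rw [sub_eq_zero] at this; exact this
    rw [← Matrix.mulVec_mulVec, h1, Matrix.mulVec_zero] at h3
    exact h3
  obtain ⟨h, hbij⟩ := aux_exists_bij f g hfg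
  refine ⟨Matrix.toLinAlgEquiv'.symm h, ?_⟩
  set D' := B + (Matrix.toLinAlgEquiv'.symm h) * (1 - A * B) with hD'
  have heq : Matrix.toLinAlgEquiv' D' = f + h ∘ₗ g := by
    rw [hD', map_add, map_mul, AlgEquiv.apply_symm_apply]
    ext x
    simp [f, g, Matrix.toLinAlgEquiv'_apply, Matrix.toLin'_apply, Module.End.mul_apply,
      Matrix.sub_mulVec, Matrix.one_mulVec, Matrix.mulVec_mulVec]
  have hu : IsUnit (Matrix.toLinAlgEquiv' D') := by
    rw [heq, Module.End.isUnit_iff]; exact hbij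
  have := hu.map (Matrix.toLinAlgEquiv' (R := k) (n := Fin n)).symm
  rwa [AlgEquiv.symm_apply_apply] at this

/-- Over a commutative local ring `R`, if `A·w = v` and `B·v = w` for column vectors
`v, w ∈ Rⁿ`, then there is an invertible matrix `D` with `D·v = w`. -/
theorem stmt_6 (R : Type*) [CommRing R] [IsLocalRing R] (n : ℕ) (hn : 1 ≤ n)
    (A B : Matrix (Fin n) (Fin n) R) (v w : Fin n → R)
    (hA : A.mulVec w = v) (hB : B.mulVec v = w) :
    ∃ D : Matrix (Fin n) (Fin n) R, IsUnit D ∧ D.mulVec v = w := by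
  set φ := IsLocalRing.residue R
  obtain ⟨C', hC'⟩ := aux_exists_unit n (A.map φ) (B.map φ)
  -- lift C' entrywise
  have hsurj : Function.Surjective φ := IsLocalRing.residue_surjective
  choose lift hlift using hsurj
  set C : Matrix (Fin n) (Fin n) R := fun i j => lift (C' i j) with hC
  have hmapC : C.map φ = C' := by
    ext i j; exact hlift (C' i j)
  set D : Matrix (Fin n) (Fin n) R := B + C * (1 - A * B) with hD
  have hmapD : D.map φ = B.map φ + C' * (1 - A.map φ * B.map φ) := by
    have : D.map φ = φ.mapMatrix D := rfl
    rw [this, hD]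
    rw [map_add, map_mul, map_sub, map_one, map_mul]
    simp [RingHom.mapMatrix_apply, hmapC]
  refine ⟨D, ?_, ?_⟩
  · -- IsUnit D since det unit
    rw [Matrix.isUnit_iff_isUnit_det]
    by_contra hdet
    have hmem : D.det ∈ IsLocalRing.maximalIdeal R := hdet
    have : φ D.det = 0 := (Ideal.Quotient.eq_zero_iff_mem).2 hmem
    have hdet' : (D.map φ).det = 0 := by
      rw [← this, RingHom.map_det]; rfl
    rw [hmapD] at hdet'
    have := (Matrix.isUnit_iff_isUnit_det _).1 hC'
    rw [hdet'] at this
    exact (not_isUnit_zero : ¬ IsUnit (0 : IsLocalRing.ResidueField R)) this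
  · rw [hD, Matrix.add_mulVec, ← Matrix.mulVec_mulVec, Matrix.sub_mulVec,
      Matrix.one_mulVec, ← Matrix.mulVec_mulVec, hB, hA]
    simp
end

section
/- Let k be a field of characteristic 0 and let R be a Noetherian complete local k-algebra with maximal ideal 𝔪. Suppose there exist a k-linear derivation d : R → R and an element g ∈ 𝔪 such that d(g) is a unit of R. Then there exists a Noetherian complete local k-algebra S and a k-algebra isomorphism R ≅ S⟦t⟧ with the formal power series ring in one variable over S. -/
set_option linter.unusedSectionVars false
set_option linter.unusedVariables false
set_option linter.unusedSectionVars false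

open IsLocalRing PowerSeries Finset.Nat Finset

namespace Stmt12Aux

variable {k : Type} [Field k] [CharZero k]
  {R : Type} [CommRing R] [Algebra k R]

/-- A derivation maps `I^(m+1)` into `I^m`. -/
theorem deriv_pow_mem (e : Derivation k R R) (I : Ideal R) :
    ∀ m, ∀ x ∈ I ^ (m + 1), e x ∈ I ^ m := by
  intro m
  induction m with
  | zero => intro x _; simp
  | succ m ih =>
    intro x hx
    rw [pow_succ] at hx
    refine Submodule.mul_induction_on hx ?_ ?_
    · intro a ha b hb
      rw [Derivation.leibniz, smul_eq_mul, smul_eq_mul]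
      refine add_mem (Ideal.mul_mem_right _ _ ha) ?_
      rw [pow_succ, mul_comm b]
      exact Ideal.mul_mem_mul (ih a ha) hb
    · intro a b ha hb
      rw [map_add]; exact add_mem ha hb

theorem iter_pow_mem (e : Derivation k R R) (I : Ideal R) :
    ∀ n m x, x ∈ I ^ (m + n) → e^[n] x ∈ I ^ m := by
  intro n
  induction n with
  | zero => intro m x hx; simpa using hx
  | succ n ih =>
    intro m x hx
    rw [Function.iterate_succ_apply]
    exact ih m (e x) (deriv_pow_mem e I (m + n) x (by rwa [show m + n + 1 = m + (n+1) by ring]))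

theorem iter_zero (e : Derivation k R R) (n : ℕ) : e^[n] (0 : R) = 0 := by
  induction n with
  | zero => rfl
  | succ n ih => rw [Function.iterate_succ_apply, map_zero, ih]

end Stmt12Aux

namespace Stmt12Aux

variable {k : Type} [Field k] [CharZero k]
  {R : Type} [CommRing R] [Algebra k R]

/-- Normalized iterated derivation (divided power Taylor coefficient). -/
noncomputable def coefL (e : Derivation k R R) (n : ℕ) : R →ₗ[k] R :=
  ((Nat.factorial n : k)⁻¹) • ((e : R →ₗ[k] R) ^ n)

theorem coefL_apply (e : Derivation k R R) (n : ℕ) (r : R) :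
    coefL e n r = ((Nat.factorial n : k)⁻¹) • e^[n] r := by
  simp [coefL, Module.End.pow_apply, Derivation.coeFn_coe]

theorem coefL_zero_apply (e : Derivation k R R) (r : R) : coefL e 0 r = r := by
  simp [coefL_apply]

theorem e_coefL (e : Derivation k R R) (n : ℕ) (r : R) :
    e (coefL e n r) = ((n + 1 : ℕ) : k) • coefL e (n + 1) r := by
  rw [coefL_apply, coefL_apply, Derivation.map_smul, ← Function.iterate_succ_apply' e,
    smul_smul]
  congr 1
  have h1 : ((n + 1 : ℕ) : k) ≠ 0 := Nat.cast_ne_zero.mpr (Nat.succ_ne_zero n)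
  rw [Nat.factorial_succ, Nat.cast_mul, mul_inv, ← mul_assoc, mul_inv_cancel₀ h1, one_mul]

theorem coefL_mul (e : Derivation k R R) (n : ℕ) (a b : R) :
    coefL e n (a * b) = ∑ p ∈ antidiagonal n, coefL e p.1 a * coefL e p.2 b := by
  induction n with
  | zero => simp [coefL_zero_apply]
  | succ n ih =>
    have h1 : ((n + 1 : ℕ) : k) ≠ 0 := Nat.cast_ne_zero.mpr (Nat.succ_ne_zero n)
    have key : ((n + 1 : ℕ) : k) • coefL e (n + 1) (a * b)
        = ((n + 1 : ℕ) : k) • ∑ p ∈ antidiagonal (n + 1), coefL e p.1 a * coefL e p.2 b := by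
      rw [← e_coefL, ih, map_sum]
      have lhs : ∀ p : ℕ × ℕ, e (coefL e p.1 a * coefL e p.2 b)
          = ((p.1 + 1 : ℕ) : k) • (coefL e (p.1 + 1) a * coefL e p.2 b)
            + ((p.2 + 1 : ℕ) : k) • (coefL e p.1 a * coefL e (p.2 + 1) b) := by
        intro p
        rw [Derivation.leibniz, e_coefL, e_coefL, smul_eq_mul, smul_eq_mul,
          mul_smul_comm, mul_smul_comm, add_comm, mul_comm (coefL e p.2 b)]
      rw [Finset.sum_congr rfl fun p _ => lhs p, Finset.sum_add_distrib]
      -- RHS: (n+1) • Σ_{ad(n+1)} = Σ (p.1:k)• + Σ (p.2:k)•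
      have rhs : ((n + 1 : ℕ) : k) • ∑ p ∈ antidiagonal (n + 1), coefL e p.1 a * coefL e p.2 b
          = (∑ p ∈ antidiagonal (n + 1), ((p.1 : ℕ) : k) • (coefL e p.1 a * coefL e p.2 b))
            + ∑ p ∈ antidiagonal (n + 1), ((p.2 : ℕ) : k) • (coefL e p.1 a * coefL e p.2 b) := by
        rw [Finset.smul_sum, ← Finset.sum_add_distrib]
        refine Finset.sum_congr rfl fun p hp => ?_
        rw [← add_smul, ← Nat.cast_add, mem_antidiagonal.mp hp]
      rw [rhs, sum_antidiagonal_succ (f := fun p => ((p.1 : ℕ) : k) • (coefL e p.1 a * coefL e p.2 b)),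
        sum_antidiagonal_succ' (f := fun p => ((p.2 : ℕ) : k) • (coefL e p.1 a * coefL e p.2 b))]
      simp only [Nat.cast_zero, zero_smul, zero_add]
    have := congrArg (fun x => ((n + 1 : ℕ) : k)⁻¹ • x) key
    simpa only [inv_smul_smul₀ h1] using this

end Stmt12Aux

namespace Stmt12Aux

variable {k : Type} [Field k] [CharZero k]
  {R : Type} [CommRing R] [Algebra k R]

theorem iter_g_mul (e : Derivation k R R) (g : R) (heg : e g = 1) :
    ∀ (n : ℕ) (s : R), e^[n + 1] (g * s)
      = ((n + 1 : ℕ) : k) • e^[n] s + g * e^[n + 1] s := by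
  intro n
  induction n with
  | zero =>
    intro s
    simp only [zero_add, Function.iterate_one, Function.iterate_zero, id_eq, Derivation.leibniz,
      heg, smul_eq_mul, mul_one, Algebra.smul_def, map_natCast]
    push_cast
    ring
  | succ n ih =>
    intro s
    rw [Function.iterate_succ_apply' e (n + 1), ih s, map_add, Derivation.map_smul,
      Derivation.leibniz, heg, smul_eq_mul, smul_eq_mul, mul_one,
      ← Function.iterate_succ_apply' e n, ← Function.iterate_succ_apply' e (n + 1)]
    simp only [Algebra.smul_def, map_natCast]
    push_cast
    ring

/-- If all iterated derivatives of `r` lie in `(g)`, then `r ∈ (g)^N` for all `N`. -/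
theorem inj_aux (e : Derivation k R R) (g : R) (heg : e g = 1) :
    ∀ (N : ℕ) (r : R), (∀ n, e^[n] r ∈ Ideal.span {g}) → r ∈ Ideal.span {g} ^ N := by
  intro N
  induction N with
  | zero => intro r _; simp
  | succ N ih =>
    intro r h
    obtain ⟨s, hs⟩ := Ideal.mem_span_singleton'.mp (by simpa using h 0)
    -- hs : s * g = r
    have hr : r = g * s := by rw [← hs, mul_comm]
    have hsmem : ∀ m, e^[m] s ∈ Ideal.span {g} := by
      intro m
      have hm := h (m + 1)
      rw [hr, iter_g_mul e g heg] at hm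
      have h2 : ((m + 1 : ℕ) : k) • e^[m] s ∈ Ideal.span {g} := by
        have : g * e^[m + 1] s ∈ Ideal.span {g} :=
          Ideal.mul_mem_right _ _ (Ideal.mem_span_singleton_self g)
        simpa using sub_mem hm this
      have h1 : ((m + 1 : ℕ) : k) ≠ 0 := Nat.cast_ne_zero.mpr (Nat.succ_ne_zero m)
      have h3 : e^[m] s = (((m + 1 : ℕ) : k))⁻¹ • (((m + 1 : ℕ) : k) • e^[m] s) := by
        rw [inv_smul_smul₀ h1]
      rw [h3, Algebra.smul_def]
      exact Ideal.mul_mem_left _ _ h2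
    rw [hr, pow_succ']
    exact Ideal.mul_mem_mul (Ideal.mem_span_singleton_self g) (ih s hsmem)

end Stmt12Aux

namespace Stmt12Aux

variable {k : Type} [Field k] [CharZero k]
  {R : Type} [CommRing R] [Algebra k R]

theorem smul_mem_ideal {I : Ideal R} {x : R} (c : k) (hx : x ∈ I) : c • x ∈ I := by
  rw [Algebra.smul_def]; exact Ideal.mul_mem_left _ _ hx

theorem coefL_mem (e : Derivation k R R) (I : Ideal R) (n m : ℕ) {x : R}
    (hx : x ∈ I ^ (m + n)) : coefL e n x ∈ I ^ m := by
  rw [coefL_apply]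
  exact smul_mem_ideal _ (iter_pow_mem e I n m x hx)

theorem iter_gpow (e : Derivation k R R) (g : R) (heg : e g = 1) :
    ∀ (N : ℕ) (a : R), e^[N] (g ^ N * a) - ((Nat.factorial N : ℕ) : k) • a
      ∈ Ideal.span {g} := by
  intro N
  induction N with
  | zero => intro a; simp
  | succ N ih =>
    intro a
    have h1 : g ^ (N + 1) * a = g * (g ^ N * a) := by ring
    rw [h1, iter_g_mul e g heg]
    have t1 : g * e^[N + 1] (g ^ N * a) ∈ Ideal.span {g} :=
      Ideal.mul_mem_right _ _ (Ideal.mem_span_singleton_self g)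
    have t2 : ((N + 1 : ℕ) : k) • (e^[N] (g ^ N * a) - ((Nat.factorial N : ℕ) : k) • a)
        ∈ Ideal.span {g} := smul_mem_ideal _ (ih a)
    have key : ((N + 1 : ℕ) : k) • e^[N] (g ^ N * a) + g * e^[N + 1] (g ^ N * a)
        - ((Nat.factorial (N + 1) : ℕ) : k) • a
        = ((N + 1 : ℕ) : k) • (e^[N] (g ^ N * a) - ((Nat.factorial N : ℕ) : k) • a)
          + g * e^[N + 1] (g ^ N * a) := by
      rw [smul_sub, smul_smul, Nat.factorial_succ, Nat.cast_mul]
      push_cast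
      ring
    rw [key]
    exact add_mem t2 t1

theorem coefL_gpow_self (e : Derivation k R R) (g : R) (heg : e g = 1) (N : ℕ) (a : R) :
    coefL e N (g ^ N * a) - a ∈ Ideal.span {g} := by
  have h1 : ((Nat.factorial N : ℕ) : k) ≠ 0 := Nat.cast_ne_zero.mpr (Nat.factorial_ne_zero N)
  have := smul_mem_ideal (((Nat.factorial N : ℕ) : k))⁻¹ (iter_gpow e g heg N a)
  rw [smul_sub, inv_smul_smul₀ h1, ← coefL_apply] at this
  exact this

theorem coefL_gpow_lt (e : Derivation k R R) (g : R) {n N : ℕ} (hn : n < N) (a : R) :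
    coefL e n (g ^ N * a) ∈ Ideal.span {g} := by
  have hmem : g ^ N * a ∈ Ideal.span {g} ^ ((N - n) + n) := by
    rw [Nat.sub_add_cancel hn.le]
    exact Ideal.mul_mem_right _ _ (Ideal.pow_mem_pow (Ideal.mem_span_singleton_self g) N)
  exact Ideal.pow_le_self (Nat.sub_ne_zero_of_lt hn) (coefL_mem e _ n (N - n) hmem)

end Stmt12Aux

namespace Stmt12Aux

variable {k : Type} [Field k] [CharZero k]
  {R : Type} [CommRing R] [Algebra k R]

theorem coefL_one_succ (e : Derivation k R R) (n : ℕ) : coefL e (n + 1) (1 : R) = 0 := by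
  rw [coefL_apply, Function.iterate_succ_apply, Derivation.map_one_eq_zero, iter_zero,
    smul_zero]

theorem coefL_algebraMap_succ (e : Derivation k R R) (n : ℕ) (x : k) :
    coefL e (n + 1) (algebraMap k R x) = 0 := by
  rw [coefL_apply, Function.iterate_succ_apply, Derivation.map_algebraMap, iter_zero, smul_zero]

/-- The Taylor expansion map `R →ₐ[k] (R⧸J)⟦t⟧` associated to a derivation. -/
noncomputable def phi (e : Derivation k R R) (J : Ideal R) : R →ₐ[k] PowerSeries (R ⧸ J) where
  toFun r := PowerSeries.mk fun n => Ideal.Quotient.mk J (coefL e n r)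
  map_one' := by
    ext n
    rw [PowerSeries.coeff_mk, PowerSeries.coeff_one]
    cases n with
    | zero => simp [coefL_zero_apply]
    | succ n => simp [coefL_one_succ]
  map_mul' a b := by
    ext n
    rw [PowerSeries.coeff_mk, PowerSeries.coeff_mul, coefL_mul, map_sum]
    exact Finset.sum_congr rfl fun p _ => by rw [PowerSeries.coeff_mk, PowerSeries.coeff_mk, map_mul]
  map_zero' := by
    ext n
    simp [PowerSeries.coeff_mk]
  map_add' a b := by
    ext n
    simp [PowerSeries.coeff_mk]
  commutes' x := by
    ext n
    rw [PowerSeries.coeff_mk, PowerSeries.algebraMap_apply, PowerSeries.coeff_C]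
    cases n with
    | zero =>
      simp only [if_pos rfl, coefL_zero_apply]
      rw [IsScalarTower.algebraMap_apply k R (R ⧸ J)]
      rfl
    | succ n => simp [coefL_algebraMap_succ]

theorem phi_apply_coeff (e : Derivation k R R) (J : Ideal R) (r : R) (n : ℕ) :
    PowerSeries.coeff n (phi e J r) = Ideal.Quotient.mk J (coefL e n r) := by
  simp [phi, PowerSeries.coeff_mk]

end Stmt12Aux

namespace Stmt12Aux

variable {k : Type} [Field k] [CharZero k]
  {R : Type} [CommRing R] [Algebra k R]

theorem smul_top_pow (I : Ideal R) (n : ℕ) : (I ^ n • ⊤ : Submodule R R) = I ^ n := by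
  rw [smul_eq_mul, Ideal.mul_top]

theorem phi_injective [IsLocalRing R] [IsNoetherianRing R]
    [IsAdicComplete (IsLocalRing.maximalIdeal R) R]
    (e : Derivation k R R) (g : R) (heg : e g = 1) (hg : g ∈ IsLocalRing.maximalIdeal R) :
    Function.Injective (phi e (Ideal.span {g})) := by
  set J := Ideal.span {g} with hJ
  have hJm : J ≤ IsLocalRing.maximalIdeal R := (Ideal.span_singleton_le_iff_mem _).mpr hg
  rw [injective_iff_map_eq_zero]
  intro r hr
  have hc : ∀ n, coefL e n r ∈ J := by
    intro n
    have := congrArg (PowerSeries.coeff n) hr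
    rw [phi_apply_coeff, map_zero] at this
    exact Ideal.Quotient.eq_zero_iff_mem.mp this
  have hi : ∀ n, e^[n] r ∈ J := by
    intro n
    have h1 : e^[n] r = ((Nat.factorial n : ℕ) : k) • coefL e n r := by
      rw [coefL_apply, smul_smul, mul_inv_cancel₀
        (Nat.cast_ne_zero.mpr (Nat.factorial_ne_zero n)), one_smul]
    rw [h1]
    exact smul_mem_ideal _ (hc n)
  refine IsHausdorff.haus (inferInstance : IsHausdorff (IsLocalRing.maximalIdeal R) R) r
    fun n => ?_
  rw [SModEq.zero, smul_top_pow]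
  exact Ideal.pow_right_mono hJm n (inj_aux e g heg n r hi)

end Stmt12Aux

namespace Stmt12Aux

variable {R : Type} [CommRing R]

theorem max_quot [IsLocalRing R] {J : Ideal R} (hJ : J ≤ IsLocalRing.maximalIdeal R)
    [Nontrivial (R ⧸ J)] [IsLocalRing (R ⧸ J)] :
    IsLocalRing.maximalIdeal (R ⧸ J)
      = Ideal.map (Ideal.Quotient.mk J) (IsLocalRing.maximalIdeal R) := by
  have hs : Function.Surjective (Ideal.Quotient.mk J) := Ideal.Quotient.mk_surjective
  haveI : IsLocalHom (Ideal.Quotient.mk J) := IsLocalHom.of_surjective _ hs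
  have hc : Ideal.comap (Ideal.Quotient.mk J) (IsLocalRing.maximalIdeal (R ⧸ J))
      = IsLocalRing.maximalIdeal R :=
    ((IsLocalRing.local_hom_TFAE (Ideal.Quotient.mk J)).out 0 4).mp ‹_›
  rw [← hc, Ideal.map_comap_of_surjective _ hs]

theorem isHausdorff_of_iInf {I : Ideal R} (h : (⨅ n : ℕ, I ^ n) = ⊥) :
    IsHausdorff I R := by
  constructor
  intro x hx
  have : x ∈ (⨅ n : ℕ, I ^ n) := by
    rw [Submodule.mem_iInf]
    intro n
    have := hx n
    rwa [SModEq.zero, smul_top_pow] at this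
  rw [h] at this
  simpa using this

theorem isPrecomplete_quot (I J : Ideal R) [IsPrecomplete I R] :
    IsPrecomplete (Ideal.map (Ideal.Quotient.mk J) I) (R ⧸ J) := by
  constructor
  intro f hf
  have hs : Function.Surjective (Ideal.Quotient.mk J) := Ideal.Quotient.mk_surjective
  have hdiff : ∀ n : ℕ, ∃ y, y ∈ I ^ n ∧ Ideal.Quotient.mk J y = f (n + 1) - f n := by
    intro n
    have h1 := hf (Nat.le_succ n)
    rw [SModEq.sub_mem, smul_top_pow, ← Ideal.map_pow] at h1
    obtain ⟨y, hy, hyv⟩ := Ideal.mem_map_iff_of_surjective _ hs |>.mp h1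
    exact ⟨-y, neg_mem hy, by rw [map_neg, hyv]; ring⟩
  choose D hD1 hD2 using hdiff
  obtain ⟨L0, hL0⟩ := hs (f 0)
  set L : ℕ → R := fun n => L0 + ∑ i ∈ Finset.range n, D i with hL
  have hLmk : ∀ n, Ideal.Quotient.mk J (L n) = f n := by
    intro n
    rw [hL, map_add, hL0, map_sum]
    have : ∀ i ∈ Finset.range n, Ideal.Quotient.mk J (D i) = f (i + 1) - f i :=
      fun i _ => hD2 i
    rw [Finset.sum_congr rfl this, Finset.sum_range_sub (f := f)]
    ring
  have hLcau : ∀ {m n : ℕ}, m ≤ n → L m ≡ L n [SMOD (I ^ m • ⊤ : Submodule R R)] := by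
    intro m n hmn
    rw [SModEq.sub_mem, smul_top_pow]
    have h2 : L m - L n = -∑ i ∈ Finset.Ico m n, D i := by
      rw [hL]
      rw [Finset.sum_Ico_eq_sub _ hmn]
      ring
    rw [h2]
    refine neg_mem (Submodule.sum_mem _ fun i hi => ?_)
    exact Ideal.pow_le_pow_right (Finset.mem_Ico.mp hi).1 (hD1 i)
  obtain ⟨ℓ, hℓ⟩ := IsPrecomplete.prec ‹IsPrecomplete I R› hLcau
  refine ⟨Ideal.Quotient.mk J ℓ, fun n => ?_⟩
  rw [SModEq.sub_mem, smul_top_pow, ← Ideal.map_pow, ← hLmk n, ← map_sub]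
  refine Ideal.mem_map_of_mem _ ?_
  have := hℓ n
  rwa [SModEq.sub_mem, smul_top_pow] at this

end Stmt12Aux

namespace Stmt12Aux

variable {k : Type} [Field k] [CharZero k]
  {R : Type} [CommRing R] [Algebra k R]

theorem phi_surjective [IsLocalRing R] [IsNoetherianRing R]
    [IsAdicComplete (IsLocalRing.maximalIdeal R) R]
    (e : Derivation k R R) (g : R) (heg : e g = 1) (hg : g ∈ IsLocalRing.maximalIdeal R) :
    Function.Surjective (phi e (Ideal.span {g})) := by
  classical
  set J := Ideal.span {g} with hJdef
  set π := Ideal.Quotient.mk J with hπ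
  have hJm : J ≤ IsLocalRing.maximalIdeal R := (Ideal.span_singleton_le_iff_mem _).mpr hg
  have hJtop : J ≠ ⊤ := fun h =>
    Ideal.IsMaximal.ne_top (IsLocalRing.maximalIdeal.isMaximal R) (top_le_iff.mp (h ▸ hJm))
  haveI : Nontrivial (R ⧸ J) := Ideal.Quotient.nontrivial_iff.mpr hJtop
  haveI : IsLocalRing (R ⧸ J) :=
    IsLocalRing.of_surjective' (Ideal.Quotient.mk J) Ideal.Quotient.mk_surjective
  have hs : Function.Surjective π := Ideal.Quotient.mk_surjective
  intro F
  choose lift hlift using hs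
  -- successive approximations
  let A : ℕ → R := fun N => Nat.rec 0
    (fun N rN => rN + g ^ N * lift (PowerSeries.coeff N F - π (coefL e N rN))) N
  have hA_succ : ∀ N, A (N + 1)
      = A N + g ^ N * lift (PowerSeries.coeff N F - π (coefL e N (A N))) := fun N => rfl
  have hAcoef : ∀ N n, n < N → π (coefL e n (A N)) = PowerSeries.coeff n F := by
    intro N
    induction N with
    | zero => intro n h; exact absurd h (Nat.not_lt_zero n)
    | succ N ih =>
      intro n hn
      rw [hA_succ, map_add (coefL e n), map_add π]
      rcases Nat.lt_succ_iff_lt_or_eq.mp hn with h | h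
      · rw [ih n h]
        have h0 : π (coefL e n (g ^ N * lift (PowerSeries.coeff N F
            - π (coefL e N (A N))))) = 0 :=
          Ideal.Quotient.eq_zero_iff_mem.mpr (coefL_gpow_lt e g h _)
        rw [h0, add_zero]
      · subst h
        set a := lift (PowerSeries.coeff n F - π (coefL e n (A n))) with ha
        have h1 := coefL_gpow_self e g heg n a
        have h2 : π (coefL e n (g ^ n * a)) = π a :=
          (Ideal.Quotient.mk_eq_mk_iff_sub_mem _ _).mpr h1
        rw [h2, ha, hlift]
        ring
  have hAmem : ∀ m n : ℕ, m ≤ n → A n - A m ∈ J ^ m := by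
    intro m n hmn
    induction n with
    | zero =>
      have : m = 0 := Nat.le_zero.mp hmn
      subst this; simp
    | succ n ih =>
      rcases Nat.le_succ_iff.mp hmn with h | h
      · rw [hA_succ, add_sub_right_comm]
        refine add_mem (ih h) (Ideal.pow_le_pow_right h ?_)
        exact Ideal.mul_mem_right _ _ (Ideal.pow_mem_pow (Ideal.mem_span_singleton_self g) n)
      · subst h; simp
  have hAcau : ∀ {m n : ℕ}, m ≤ n →
      A m ≡ A n [SMOD ((IsLocalRing.maximalIdeal R) ^ m • ⊤ : Submodule R R)] := by
    intro m n hmn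
    rw [SModEq.sub_mem, smul_top_pow]
    have h2 : A m - A n = -(A n - A m) := by ring
    rw [h2]
    exact neg_mem (Ideal.pow_right_mono hJm m (hAmem m n hmn))
  obtain ⟨ℓ, hℓ⟩ := IsPrecomplete.prec
    (inferInstance : IsPrecomplete (IsLocalRing.maximalIdeal R) R) hAcau
  refine ⟨ℓ, ?_⟩
  ext n
  rw [phi_apply_coeff]
  have hKrull : (⨅ M : ℕ, (IsLocalRing.maximalIdeal (R ⧸ J)) ^ M) = ⊥ :=
    Ideal.iInf_pow_eq_bot_of_isLocalRing _
      (Ideal.IsMaximal.ne_top (IsLocalRing.maximalIdeal.isMaximal _))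
  have hx : ∀ M : ℕ, π (coefL e n ℓ) - PowerSeries.coeff n F
      ∈ (IsLocalRing.maximalIdeal (R ⧸ J)) ^ M := by
    intro M
    have hn : n < M + 1 + n := by omega
    rw [← hAcoef (M + 1 + n) n hn, ← map_sub π, ← map_sub (coefL e n)]
    have h3 : ℓ - A (M + 1 + n) ∈ (IsLocalRing.maximalIdeal R) ^ (M + 1 + n) := by
      have h := hℓ (M + 1 + n)
      rw [SModEq.sub_mem, smul_top_pow] at h
      have h4 : ℓ - A (M + 1 + n) = -(A (M + 1 + n) - ℓ) := by ring
      rw [h4]; exact neg_mem h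
    have h5 : coefL e n (ℓ - A (M + 1 + n)) ∈ (IsLocalRing.maximalIdeal R) ^ (M + 1) :=
      coefL_mem e _ n (M + 1) h3
    have h6 : π (coefL e n (ℓ - A (M + 1 + n)))
        ∈ Ideal.map π ((IsLocalRing.maximalIdeal R) ^ (M + 1)) := Ideal.mem_map_of_mem _ h5
    rw [Ideal.map_pow, ← max_quot hJm] at h6
    exact Ideal.pow_le_pow_right (Nat.le_succ M) h6
  have hmem : π (coefL e n ℓ) - PowerSeries.coeff n F
      ∈ (⨅ M : ℕ, (IsLocalRing.maximalIdeal (R ⧸ J)) ^ M) :=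
    Submodule.mem_iInf _ |>.mpr hx
  rw [hKrull] at hmem
  exact sub_eq_zero.mp (by simpa using hmem)

end Stmt12Aux



/-- If a Noetherian complete local `k`-algebra `R` (`char k = 0`) admits a `k`-linear
derivation `d : R → R` and an element `g` of the maximal ideal with `d g` a unit, then
`R` is isomorphic as a `k`-algebra to a formal power series ring in one variable over a
Noetherian complete local `k`-algebra `S`. -/
theorem stmt_12 (k : Type) [Field k] [CharZero k]
    (R : Type) [CommRing R] [Algebra k R] [IsLocalRing R] [IsNoetherianRing R]
    [IsAdicComplete (IsLocalRing.maximalIdeal R) R]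
    (d : Derivation k R R) (g : R) (hg : g ∈ IsLocalRing.maximalIdeal R)
    (hdg : IsUnit (d g)) :
    ∃ (S : Type) (_ : CommRing S) (_ : Algebra k S) (_ : IsLocalRing S)
      (_ : IsNoetherianRing S) (_ : IsAdicComplete (IsLocalRing.maximalIdeal S) S),
      Nonempty (R ≃ₐ[k] PowerSeries S) := by
  classical
  open Stmt12Aux in
  let e : Derivation k R R := ((hdg.unit⁻¹ : Rˣ) : R) • d
  have heg : e g = 1 := by
    show ((hdg.unit⁻¹ : Rˣ) : R) • d g = 1
    rw [smul_eq_mul]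
    exact hdg.val_inv_mul
  set J := Ideal.span {g} with hJdef
  have hJm : J ≤ IsLocalRing.maximalIdeal R := (Ideal.span_singleton_le_iff_mem _).mpr hg
  have hJtop : J ≠ ⊤ := fun h =>
    Ideal.IsMaximal.ne_top (IsLocalRing.maximalIdeal.isMaximal R) (top_le_iff.mp (h ▸ hJm))
  haveI : Nontrivial (R ⧸ J) := Ideal.Quotient.nontrivial_iff.mpr hJtop
  haveI : IsLocalRing (R ⧸ J) :=
    IsLocalRing.of_surjective' (Ideal.Quotient.mk J) Ideal.Quotient.mk_surjective
  haveI : IsNoetherianRing (R ⧸ J) := inferInstance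
  haveI hH : IsHausdorff (IsLocalRing.maximalIdeal (R ⧸ J)) (R ⧸ J) :=
    Stmt12Aux.isHausdorff_of_iInf (Ideal.iInf_pow_eq_bot_of_isLocalRing _
      (Ideal.IsMaximal.ne_top (IsLocalRing.maximalIdeal.isMaximal _)))
  haveI hP : IsPrecomplete (IsLocalRing.maximalIdeal (R ⧸ J)) (R ⧸ J) :=
    (Stmt12Aux.max_quot hJm) ▸ Stmt12Aux.isPrecomplete_quot (IsLocalRing.maximalIdeal R) J
  haveI : IsAdicComplete (IsLocalRing.maximalIdeal (R ⧸ J)) (R ⧸ J) := ⟨⟩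
  refine ⟨R ⧸ J, inferInstance, inferInstance, inferInstance, inferInstance, inferInstance,
    ⟨AlgEquiv.ofBijective (Stmt12Aux.phi e J)
      ⟨Stmt12Aux.phi_injective e g heg hg, Stmt12Aux.phi_surjective e g heg hg⟩⟩⟩
end

section
/- Let k be an algebraically closed field of characteristic p > 0 and let f = x^p + y^p·z ∈ k[x,y,z]. Let (a,b,c) ∈ k³ satisfy a^p + b^p·c = 0. Then the k-algebras k⟦x,y,z⟧/(f(x+a, y+b, z+c)) and k⟦x,y,z⟧/(f) are isomorphic if and only if a = 0 and b = 0. In other words, the isosingular locus at the origin of the hypersurface defined by f consists exactly of the points of the z-axis. -/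
open MvPowerSeries

/-- The polynomial `f(x + a)` obtained from `f` by translating the variables by `a`. -/
noncomputable def translatePoly {N : ℕ} {k : Type*} [CommRing k]
    (a : Fin N → k) (f : MvPolynomial (Fin N) k) : MvPolynomial (Fin N) k :=
  MvPolynomial.aeval (fun j => MvPolynomial.X j + MvPolynomial.C (a j)) f

namespace Stmt15Aux

open Finsupp TrivSqZeroExt

variable {k : Type} [Field k]


noncomputable def subP (γ : k) : MvPolynomial (Fin 3) k →ₐ[k] MvPolynomial (Fin 3) k :=
  MvPolynomial.aeval
    ![MvPolynomial.X 0 + MvPolynomial.C γ * MvPolynomial.X 1, MvPolynomial.X 1, MvPolynomial.X 2]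

def degT (d : Fin 3 →₀ ℕ) : ℕ := d 0 + d 1 + d 2

lemma degT_add (u v : Fin 3 →₀ ℕ) : degT (u + v) = degT u + degT v := by
  simp only [degT, Finsupp.add_apply]; ring

noncomputable def sigFun (γ : k) (s : MvPowerSeries (Fin 3) k) : MvPowerSeries (Fin 3) k :=
  fun e => ∑ j ∈ Finset.range (e 1 + 1),
    ((e 0 + j).choose j : k) * γ ^ j * s (e + Finsupp.single 0 j - Finsupp.single 1 j)

lemma coeff_sigFun (γ : k) (s : MvPowerSeries (Fin 3) k) (e : Fin 3 →₀ ℕ) :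
    coeff e (sigFun γ s) = ∑ j ∈ Finset.range (e 1 + 1),
      ((e 0 + j).choose j : k) * γ ^ j
        * coeff (e + Finsupp.single 0 j - Finsupp.single 1 j) s := rfl

lemma shift_apply (e : Fin 3 →₀ ℕ) (j : ℕ) :
    ((e + Finsupp.single 0 j - Finsupp.single 1 j : Fin 3 →₀ ℕ) : Fin 3 → ℕ) 0 = e 0 + j
    ∧ ((e + Finsupp.single 0 j - Finsupp.single 1 j : Fin 3 →₀ ℕ) : Fin 3 → ℕ) 1 = e 1 - j
    ∧ ((e + Finsupp.single 0 j - Finsupp.single 1 j : Fin 3 →₀ ℕ) : Fin 3 → ℕ) 2 = e 2 := by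
  refine ⟨?_, ?_, ?_⟩ <;>
    simp [Finsupp.tsub_apply, Finsupp.add_apply, Finsupp.single_apply]

lemma degT_shift (e : Fin 3 →₀ ℕ) (j : ℕ) (hj : j ≤ e 1) :
    degT (e + Finsupp.single 0 j - Finsupp.single 1 j) = degT e := by
  obtain ⟨h0, h1, h2⟩ := shift_apply e j
  simp only [degT, h0, h1, h2]
  omega

lemma sig_local (γ : k) {s t : MvPowerSeries (Fin 3) k} {N : ℕ}
    (h : ∀ d, degT d ≤ N → coeff d s = coeff d t)
    (e : Fin 3 →₀ ℕ) (he : degT e ≤ N) :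
    coeff e (sigFun γ s) = coeff e (sigFun γ t) := by
  rw [coeff_sigFun, coeff_sigFun]
  refine Finset.sum_congr rfl fun j hj => ?_
  rw [h _ (by rw [degT_shift e j (by simpa using Nat.lt_succ_iff.mp (Finset.mem_range.mp hj))]; exact he)]


lemma fin3_ext {d d' : Fin 3 →₀ ℕ} (h0 : d 0 = d' 0) (h1 : d 1 = d' 1) (h2 : d 2 = d' 2) :
    d = d' := by
  ext j; fin_cases j <;> assumption

lemma triple_apply (m n l : ℕ) :
    ((Finsupp.single 0 m + Finsupp.single 1 n + Finsupp.single 2 l : Fin 3 →₀ ℕ) : Fin 3 → ℕ) 0 = m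
    ∧ ((Finsupp.single 0 m + Finsupp.single 1 n + Finsupp.single 2 l : Fin 3 →₀ ℕ) : Fin 3 → ℕ) 1 = n
    ∧ ((Finsupp.single 0 m + Finsupp.single 1 n + Finsupp.single 2 l : Fin 3 →₀ ℕ) : Fin 3 → ℕ) 2 = l := by
  refine ⟨?_, ?_, ?_⟩ <;> simp [Finsupp.add_apply, Finsupp.single_apply]

lemma eq_triple_iff (e : Fin 3 →₀ ℕ) (m n l : ℕ) :
    e = Finsupp.single 0 m + Finsupp.single 1 n + Finsupp.single 2 l
      ↔ e 0 = m ∧ e 1 = n ∧ e 2 = l := by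
  obtain ⟨h0, h1, h2⟩ := triple_apply m n l
  constructor
  · intro h; subst h; exact ⟨h0, h1, h2⟩
  · rintro ⟨g0, g1, g2⟩
    exact fin3_ext (by rw [g0, h0]) (by rw [g1, h1]) (by rw [g2, h2])

lemma prod_eq_monomial (m n l : ℕ) (α : k) :
    MvPowerSeries.C (σ := Fin 3) (R := k) α * X 0 ^ m * X 1 ^ n * X 2 ^ l
      = monomial (Finsupp.single 0 m + Finsupp.single 1 n + Finsupp.single 2 l) α := by
  have hC : MvPowerSeries.C (σ := Fin 3) (R := k) α = monomial (0 : Fin 3 →₀ ℕ) α := rfl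
  rw [hC, X_pow_eq, X_pow_eq, X_pow_eq, monomial_mul_monomial, monomial_mul_monomial,
    monomial_mul_monomial, mul_one, mul_one, mul_one, zero_add]

lemma sig_monomial (γ : k) (d : Fin 3 →₀ ℕ) (r : k) :
    sigFun γ ((MvPolynomial.monomial d r : MvPolynomial (Fin 3) k) : MvPowerSeries (Fin 3) k)
      = ((subP γ (MvPolynomial.monomial d r) : MvPolynomial (Fin 3) k) :
          MvPowerSeries (Fin 3) k) := by
  classical
  ext e
  -- LHS closed form
  have hlhs : coeff e (sigFun γ ((MvPolynomial.monomial d r : MvPolynomial (Fin 3) k) :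
      MvPowerSeries (Fin 3) k))
      = if e 0 ≤ d 0 ∧ e 1 = d 1 + (d 0 - e 0) ∧ e 2 = d 2 then
          ((d 0).choose (e 0) : k) * γ ^ (d 0 - e 0) * r else 0 := by
    rw [coeff_sigFun]
    have hterm : ∀ j, coeff (e + Finsupp.single 0 j - Finsupp.single 1 j)
        ((MvPolynomial.monomial d r : MvPolynomial (Fin 3) k) : MvPowerSeries (Fin 3) k)
        = if e 0 + j = d 0 ∧ e 1 - j = d 1 ∧ e 2 = d 2 then r else 0 := by
      intro j
      rw [MvPolynomial.coeff_coe, MvPolynomial.coeff_monomial]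
      congr 1
      rw [eq_iff_iff]
      obtain ⟨h0, h1, h2⟩ := shift_apply e j
      constructor
      · intro h
        exact ⟨by rw [← h0, ← h], by rw [← h1, ← h], by rw [← h2, ← h]⟩
      · rintro ⟨g0, g1, g2⟩
        exact fin3_ext (by rw [h0]; omega) (by rw [h1]; omega) (by rw [h2]; omega)
    simp_rw [hterm]
    by_cases hC : e 0 ≤ d 0 ∧ e 1 = d 1 + (d 0 - e 0) ∧ e 2 = d 2
    · obtain ⟨hc0, hc1, hc2⟩ := hC
      rw [if_pos ⟨hc0, hc1, hc2⟩]
      rw [Finset.sum_eq_single (d 0 - e 0)]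
      · rw [if_pos (by omega), Nat.add_sub_cancel' hc0, Nat.choose_symm hc0]
      · intro j _ hj
        rw [if_neg (by omega), mul_zero]
      · intro hmem
        exact absurd (Finset.mem_range.mpr (by omega)) hmem
    · rw [if_neg hC]
      refine Finset.sum_eq_zero fun j hj => ?_
      have hjle : j ≤ e 1 := by
        simpa using Nat.lt_succ_iff.mp (Finset.mem_range.mp hj)
      rw [if_neg (fun ⟨g0, g1, g2⟩ => hC ⟨by omega, by omega, g2⟩), mul_zero]
  rw [hlhs]
  -- RHS: polynomial identity then expansion
  have hpoly : subP γ (MvPolynomial.monomial d r)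
      = MvPolynomial.C r * (MvPolynomial.X 0 + MvPolynomial.C γ * MvPolynomial.X 1) ^ (d 0)
        * MvPolynomial.X 1 ^ (d 1) * MvPolynomial.X 2 ^ (d 2) := by
    rw [subP, MvPolynomial.aeval_monomial]
    rw [Finsupp.prod_fintype _ _ (fun i => pow_zero _), Fin.prod_univ_three]
    simp only [Matrix.cons_val_zero, Matrix.cons_val_one, Matrix.head_cons,
      Matrix.cons_val_two, Matrix.tail_cons, MvPolynomial.algebraMap_eq]
    ring
  rw [hpoly]
  rw [MvPolynomial.coe_mul, MvPolynomial.coe_mul, MvPolynomial.coe_mul, MvPolynomial.coe_pow,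
    MvPolynomial.coe_pow, MvPolynomial.coe_pow, MvPolynomial.coe_add, MvPolynomial.coe_mul,
    MvPolynomial.coe_X, MvPolynomial.coe_X, MvPolynomial.coe_X, MvPolynomial.coe_C,
    MvPolynomial.coe_C]
  rw [add_pow]
  rw [Finset.mul_sum, Finset.sum_mul, Finset.sum_mul, map_sum]
  have hterm2 : ∀ m ∈ Finset.range (d 0 + 1),
      coeff e (MvPowerSeries.C (σ := Fin 3) (R := k) r * (X 0 ^ m
          * (MvPowerSeries.C (σ := Fin 3) (R := k) γ * X 1) ^ (d 0 - m) * ((d 0).choose m : MvPowerSeries (Fin 3) k))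
        * X 1 ^ (d 1) * X 2 ^ (d 2))
      = if e 0 = m ∧ e 1 = d 0 - m + d 1 ∧ e 2 = d 2 then
          ((d 0).choose m : k) * γ ^ (d 0 - m) * r else 0 := by
    intro m _
    have : MvPowerSeries.C (σ := Fin 3) (R := k) r * (X 0 ^ m
          * (MvPowerSeries.C (σ := Fin 3) (R := k) γ * X 1) ^ (d 0 - m) * ((d 0).choose m : MvPowerSeries (Fin 3) k))
        * X 1 ^ (d 1) * X 2 ^ (d 2)
        = MvPowerSeries.C (σ := Fin 3) (R := k) (((d 0).choose m : k) * γ ^ (d 0 - m) * r)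
          * X 0 ^ m * X 1 ^ (d 0 - m + d 1) * X 2 ^ (d 2) := by
      rw [mul_pow, ← map_pow, map_mul, map_mul, map_natCast, pow_add]
      ring
    rw [this, prod_eq_monomial, MvPowerSeries.coeff_monomial]
    simp only [eq_triple_iff]
  rw [Finset.sum_congr rfl hterm2]
  symm
  by_cases hC : e 0 ≤ d 0 ∧ e 1 = d 1 + (d 0 - e 0) ∧ e 2 = d 2
  · obtain ⟨hc0, hc1, hc2⟩ := hC
    rw [if_pos ⟨hc0, hc1, hc2⟩, Finset.sum_eq_single (e 0)]
    · rw [if_pos ⟨rfl, by omega, hc2⟩]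
    · intro j _ hj; rw [if_neg (by omega)]
    · intro hmem; exact absurd (Finset.mem_range.mpr (by omega)) hmem
  · rw [if_neg hC]
    refine Finset.sum_eq_zero fun m hm => ?_
    have hmle : m ≤ d 0 := by simpa using Nat.lt_succ_iff.mp (Finset.mem_range.mp hm)
    rw [if_neg (fun ⟨g0, g1, g2⟩ => hC ⟨by omega, by omega, g2⟩)]

lemma sig_add (γ : k) (s t : MvPowerSeries (Fin 3) k) :
    sigFun γ (s + t) = sigFun γ s + sigFun γ t := by
  ext e
  have : coeff e (sigFun γ s + sigFun γ t) = coeff e (sigFun γ s) + coeff e (sigFun γ t) :=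
    map_add _ _ _
  rw [this, coeff_sigFun, coeff_sigFun, coeff_sigFun, ← Finset.sum_add_distrib]
  refine Finset.sum_congr rfl fun j _ => ?_
  have : coeff (e + Finsupp.single 0 j - Finsupp.single 1 j) (s + t)
      = coeff (e + Finsupp.single 0 j - Finsupp.single 1 j) s
        + coeff (e + Finsupp.single 0 j - Finsupp.single 1 j) t := map_add _ _ _
  rw [this]
  ring

lemma sig_poly (γ : k) (q : MvPolynomial (Fin 3) k) :
    sigFun γ (q : MvPowerSeries (Fin 3) k) = ((subP γ q : MvPolynomial (Fin 3) k) :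
      MvPowerSeries (Fin 3) k) := by
  induction q using MvPolynomial.induction_on' with
  | monomial d r => exact sig_monomial γ d r
  | add p q hp hq =>
    rw [MvPolynomial.coe_add, sig_add, hp, hq, map_add, MvPolynomial.coe_add]

noncomputable def truncP (N : ℕ) (s : MvPowerSeries (Fin 3) k) : MvPolynomial (Fin 3) k :=
  ∑ d ∈ Finset.filter (fun d => degT d ≤ N)
    (Finset.Iic (Finsupp.single 0 N + Finsupp.single 1 N + Finsupp.single 2 N)),
    MvPolynomial.monomial d (coeff d s)

lemma apply_le_degT (d : Fin 3 →₀ ℕ) (j : Fin 3) : d j ≤ degT d := by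
  fin_cases j
  · show d 0 ≤ degT d; simp only [degT]; omega
  · show d 1 ≤ degT d; simp only [degT]; omega
  · show d 2 ≤ degT d; simp only [degT]; omega

lemma bigD_apply (N : ℕ) (j : Fin 3) :
    ((Finsupp.single 0 N + Finsupp.single 1 N + Finsupp.single 2 N : Fin 3 →₀ ℕ) : Fin 3 → ℕ) j
      = N := by
  obtain ⟨h0, h1, h2⟩ := triple_apply N N N
  fin_cases j
  · exact h0
  · exact h1
  · exact h2

lemma mem_truncP_iff (N : ℕ) (d : Fin 3 →₀ ℕ) :
    d ∈ Finset.filter (fun d => degT d ≤ N)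
      (Finset.Iic (Finsupp.single 0 N + Finsupp.single 1 N + Finsupp.single 2 N))
      ↔ degT d ≤ N := by
  rw [Finset.mem_filter, Finset.mem_Iic]
  constructor
  · exact fun h => h.2
  · intro h
    refine ⟨?_, h⟩
    intro j
    rw [bigD_apply]
    exact le_trans (apply_le_degT d j) h

lemma coeff_truncP (N : ℕ) (s : MvPowerSeries (Fin 3) k) (d : Fin 3 →₀ ℕ) :
    coeff d ((truncP N s : MvPolynomial (Fin 3) k) : MvPowerSeries (Fin 3) k)
      = if degT d ≤ N then coeff d s else 0 := by
  classical
  rw [MvPolynomial.coeff_coe, truncP, MvPolynomial.coeff_sum]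
  simp_rw [MvPolynomial.coeff_monomial]
  rw [Finset.sum_ite_eq' _ d (fun d => coeff d s)]
  congr 1
  rw [eq_iff_iff, mem_truncP_iff]

lemma mul_local {s s' t t' : MvPowerSeries (Fin 3) k} {N : ℕ}
    (hs : ∀ d, degT d ≤ N → coeff d s = coeff d s')
    (ht : ∀ d, degT d ≤ N → coeff d t = coeff d t') :
    ∀ d, degT d ≤ N → coeff d (s * t) = coeff d (s' * t') := by
  classical
  intro d hd
  rw [MvPowerSeries.coeff_mul, MvPowerSeries.coeff_mul]
  refine Finset.sum_congr rfl fun uv huv => ?_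
  have hsum := Finset.HasAntidiagonal.mem_antidiagonal.mp huv
  have hdeg : degT uv.1 + degT uv.2 = degT d := by rw [← degT_add, hsum]
  rw [hs _ (by omega), ht _ (by omega)]

lemma trunc_agree (N : ℕ) (s : MvPowerSeries (Fin 3) k) :
    ∀ d, degT d ≤ N → coeff d s
      = coeff d ((truncP N s : MvPolynomial (Fin 3) k) : MvPowerSeries (Fin 3) k) :=
  fun d hd => by rw [coeff_truncP, if_pos hd]

lemma sig_mul (γ : k) (s t : MvPowerSeries (Fin 3) k) :
    sigFun γ (s * t) = sigFun γ s * sigFun γ t := by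
  classical
  ext e
  set N := degT e with hN
  have h1 : coeff e (sigFun γ (s * t))
      = coeff e (sigFun γ (((truncP N s : MvPolynomial (Fin 3) k) : MvPowerSeries (Fin 3) k)
          * ((truncP N t : MvPolynomial (Fin 3) k) : MvPowerSeries (Fin 3) k))) :=
    sig_local γ (mul_local (trunc_agree N s) (trunc_agree N t)) e le_rfl
  have h2 : coeff e (sigFun γ s * sigFun γ t)
      = coeff e (sigFun γ ((truncP N s : MvPolynomial (Fin 3) k) : MvPowerSeries (Fin 3) k)
          * sigFun γ ((truncP N t : MvPolynomial (Fin 3) k) : MvPowerSeries (Fin 3) k)) := by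
    apply mul_local (N := N) ?_ ?_ e le_rfl
    · exact fun d hd => sig_local γ (trunc_agree N s) d hd
    · exact fun d hd => sig_local γ (trunc_agree N t) d hd
  rw [h1, h2, ← MvPolynomial.coe_mul, sig_poly, map_mul, MvPolynomial.coe_mul,
    sig_poly, sig_poly]

lemma sig_one (γ : k) : sigFun γ (1 : MvPowerSeries (Fin 3) k) = 1 := by
  rw [← MvPolynomial.coe_one, sig_poly, map_one, MvPolynomial.coe_one]

lemma sig_C (γ : k) (r : k) :
    sigFun γ (MvPowerSeries.C (σ := Fin 3) (R := k) r) = MvPowerSeries.C (σ := Fin 3) (R := k) r := by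
  rw [← MvPolynomial.coe_C, sig_poly]
  have : subP γ (MvPolynomial.C r) = MvPolynomial.C r := by
    rw [subP]
    simp
  rw [this]

lemma sig_zero (γ : k) : sigFun γ (0 : MvPowerSeries (Fin 3) k) = 0 := by
  ext e
  rw [coeff_sigFun]
  simp

noncomputable def sigHom (γ : k) : MvPowerSeries (Fin 3) k →ₐ[k] MvPowerSeries (Fin 3) k where
  toFun := sigFun γ
  map_one' := sig_one γ
  map_mul' := sig_mul γ
  map_zero' := sig_zero γ
  map_add' := sig_add γ
  commutes' r := by
    rw [← MvPowerSeries.c_eq_algebraMap]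
    exact sig_C γ r

lemma subP_comp (γ : k) (q : MvPolynomial (Fin 3) k) : subP γ (subP (-γ) q) = q := by
  have h : (subP γ).comp (subP (-γ)) = AlgHom.id k (MvPolynomial (Fin 3) k) := by
    apply MvPolynomial.algHom_ext
    intro i
    fin_cases i <;>
      simp [subP, Matrix.cons_val_zero, Matrix.cons_val_one, Matrix.head_cons] 
  exact DFunLike.congr_fun h q

lemma sig_inv (γ : k) (s : MvPowerSeries (Fin 3) k) : sigFun γ (sigFun (-γ) s) = s := by
  ext e
  set N := degT e with hN
  have h1 : ∀ d, degT d ≤ N → coeff d (sigFun (-γ) s)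
      = coeff d (sigFun (-γ) ((truncP N s : MvPolynomial (Fin 3) k) : MvPowerSeries (Fin 3) k)) :=
    fun d hd => sig_local (-γ) (trunc_agree N s) d hd
  have h2 : coeff e (sigFun γ (sigFun (-γ) s))
      = coeff e (sigFun γ (sigFun (-γ)
          ((truncP N s : MvPolynomial (Fin 3) k) : MvPowerSeries (Fin 3) k))) :=
    sig_local γ h1 e le_rfl
  rw [h2, sig_poly, sig_poly, subP_comp, ← trunc_agree N s e le_rfl]

noncomputable def sigEquiv (γ : k) : MvPowerSeries (Fin 3) k ≃ₐ[k] MvPowerSeries (Fin 3) k :=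
  AlgEquiv.ofAlgHom (sigHom γ) (sigHom (-γ))
    (AlgHom.ext fun s => sig_inv γ s)
    (AlgHom.ext fun s => by
      have := sig_inv (-γ) s
      rwa [neg_neg] at this)

lemma sigEquiv_poly (γ : k) (q : MvPolynomial (Fin 3) k) :
    sigEquiv γ (q : MvPowerSeries (Fin 3) k)
      = ((subP γ q : MvPolynomial (Fin 3) k) : MvPowerSeries (Fin 3) k) :=
  sig_poly γ q



noncomputable def Phi : (MvPowerSeries (Fin 3) k) →ₐ[k] TrivSqZeroExt k (Fin 3 → k) where
  toFun s := ⟨constantCoeff (σ := Fin 3) (R := k) s, fun i => coeff (Finsupp.single i 1) s⟩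
  map_one' := by
    classical
    refine TrivSqZeroExt.ext (by simp) ?_
    funext i
    simp [MvPowerSeries.coeff_one]
  map_mul' s t := by
    classical
    refine TrivSqZeroExt.ext (by simp; rfl) ?_
    funext i
    have h1 : (Finset.HasAntidiagonal.antidiagonal (1:ℕ)) = {(0,1),(1,0)} := rfl
    simp only [MvPowerSeries.coeff_mul, Finsupp.antidiagonal_single, Finset.sum_map, h1]
    simp [TrivSqZeroExt.snd_mul, coeff_zero_eq_constantCoeff, mul_comm]
    rw [mul_comm (constantCoeff t)]; rfl
  map_zero' := by
    refine TrivSqZeroExt.ext (by simp) ?_; funext i; simp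
  map_add' s t := by
    refine TrivSqZeroExt.ext (by simp; rfl) ?_; funext i; simp; rfl
  commutes' r := by
    classical
    refine TrivSqZeroExt.ext ?_ ?_
    · simp [MvPowerSeries.algebraMap_apply, TrivSqZeroExt.algebraMap_eq_inl]
    · funext i
      simp [MvPowerSeries.algebraMap_apply, TrivSqZeroExt.algebraMap_eq_inl,
        MvPowerSeries.coeff_C]

lemma Phi_X (i : Fin 3) : Phi (X i : MvPowerSeries (Fin 3) k) = inr (Pi.single i 1) := by
  classical
  refine TrivSqZeroExt.ext (by show constantCoeff (X i : MvPowerSeries (Fin 3) k) = 0; simp) ?_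
  show (fun j => coeff (Finsupp.single j 1) (X i : MvPowerSeries (Fin 3) k)) = _
  funext j
  rw [MvPowerSeries.coeff_X]
  by_cases h : j = i
  · subst h; simp
  · rw [if_neg (fun hs => h (Finsupp.single_left_injective one_ne_zero hs)),
      TrivSqZeroExt.snd_inr, Pi.single_apply, if_neg h]

lemma Phi_C (r : k) : Phi (MvPowerSeries.C (σ := Fin 3) (R := k) r) = inl r := by
  rw [MvPowerSeries.c_eq_algebraMap]
  show Phi (algebraMap k _ r) = _
  rw [AlgHom.commutes, TrivSqZeroExt.algebraMap_eq_inl]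

lemma Phi_surj : Function.Surjective (Phi (k := k)) := by
  intro t
  refine ⟨MvPowerSeries.C (σ := Fin 3) (R := k) t.fst + ∑ i, MvPowerSeries.C (σ := Fin 3) (R := k) (t.snd i) * X i, ?_⟩
  rw [map_add, map_sum, Phi_C]
  have : ∀ i : Fin 3, Phi (MvPowerSeries.C (σ := Fin 3) (R := k) (t.snd i) * X i) = inr (Pi.single i (t.snd i)) := by
    intro i
    rw [map_mul, Phi_C, Phi_X, inl_mul_inr]
    congr 1
    funext j
    simp [Pi.single_apply, mul_comm]
  simp_rw [this, ← TrivSqZeroExt.inr_sum]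
  rw [Finset.univ_sum_single]
  exact (TrivSqZeroExt.inl_fst_add_inr_snd_eq t).symm ▸ rfl

lemma coeff_X_mul' (i : Fin 3) (t : MvPowerSeries (Fin 3) k) (e : Fin 3 →₀ ℕ) :
    coeff e (X i * t) = if 1 ≤ e i then coeff (e - Finsupp.single i 1) t else 0 := by
  classical
  rw [X, MvPowerSeries.coeff_monomial_mul, one_mul]
  congr 1
  simp [Finsupp.single_le_iff]

noncomputable def shiftF (i : Fin 3) (s : MvPowerSeries (Fin 3) k) : MvPowerSeries (Fin 3) k :=
  fun d => s (d + Finsupp.single i 1)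
noncomputable def projF (i : Fin 3) (s : MvPowerSeries (Fin 3) k) : MvPowerSeries (Fin 3) k :=
  fun d => if d i = 0 then s d else 0

lemma coeff_shiftF (i : Fin 3) (s : MvPowerSeries (Fin 3) k) (d : Fin 3 →₀ ℕ) :
    coeff d (shiftF i s) = coeff (d + Finsupp.single i 1) s := rfl
lemma coeff_projF (i : Fin 3) (s : MvPowerSeries (Fin 3) k) (d : Fin 3 →₀ ℕ) :
    coeff d (projF i s) = if d i = 0 then coeff d s else 0 := rfl

lemma split (i : Fin 3) (s : MvPowerSeries (Fin 3) k) :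
    s = X i * shiftF i s + projF i s := by
  classical
  ext e
  rw [map_add, coeff_X_mul']
  by_cases h : 1 ≤ e i
  · have h2 : coeff e (projF i s) = 0 := by
      rw [coeff_projF, if_neg (by omega)]
    have h1 : coeff (e - Finsupp.single i 1) (shiftF i s) = coeff e s := by
      rw [coeff_shiftF, tsub_add_cancel_of_le ((Finsupp.single_le_iff).mpr h)]
    rw [if_pos h, h1, h2, add_zero]
  · have h2 : coeff e (projF i s) = coeff e s := by
      rw [coeff_projF, if_pos (by omega)]
    rw [if_neg h, h2, zero_add]

lemma decomp (s : MvPowerSeries (Fin 3) k) :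
    ∃ u : Fin 3 → MvPowerSeries (Fin 3) k,
      s = MvPowerSeries.C (σ := Fin 3) (R := k) (constantCoeff (σ := Fin 3) (R := k) s)
        + (X 0 * u 0 + X 1 * u 1 + X 2 * u 2) := by
  classical
  obtain ⟨u0, t0, h0, ht0⟩ : ∃ u t, s = X 0 * u + t ∧ ∀ d : Fin 3 →₀ ℕ,
      coeff d t = if d 0 = 0 then coeff d s else 0 :=
    ⟨_, _, split 0 s, coeff_projF 0 s⟩
  obtain ⟨u1, t1, h1, ht1⟩ : ∃ u t, t0 = X 1 * u + t ∧ ∀ d : Fin 3 →₀ ℕ,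
      coeff d t = if d 1 = 0 then coeff d t0 else 0 :=
    ⟨_, _, split 1 t0, coeff_projF 1 t0⟩
  obtain ⟨u2, t2, h2, ht2⟩ : ∃ u t, t1 = X 2 * u + t ∧ ∀ d : Fin 3 →₀ ℕ,
      coeff d t = if d 2 = 0 then coeff d t1 else 0 :=
    ⟨_, _, split 2 t1, coeff_projF 2 t1⟩
  have hc : t2 = MvPowerSeries.C (σ := Fin 3) (R := k) (constantCoeff (σ := Fin 3) (R := k) s) := by
    ext d
    rw [ht2, MvPowerSeries.coeff_C]
    by_cases hd : d = 0
    · subst hd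
      simp only [if_pos rfl]
      rw [ht1, ht0]
      simp [MvPowerSeries.coeff_zero_eq_constantCoeff]
    · rw [if_neg hd]
      have : d 0 ≠ 0 ∨ d 1 ≠ 0 ∨ d 2 ≠ 0 := by
        by_contra hcon
        push_neg at hcon
        exact hd (by ext j; fin_cases j <;> simp [hcon.1, hcon.2.1, hcon.2.2])
      rcases this with h | h | h
      · rw [ht1, ht0]
        by_cases hd2 : d 2 = 0
        · rw [if_pos hd2]
          by_cases hd1 : d 1 = 0
          · rw [if_pos hd1, if_neg h]
          · rw [if_neg hd1]
        · rw [if_neg hd2]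
      · by_cases hd2 : d 2 = 0
        · rw [if_pos hd2, ht1, if_neg h]
        · rw [if_neg hd2]
      · rw [if_neg h]
  refine ⟨![u0, u1, u2], ?_⟩
  have e0 : ![u0, u1, u2] (0 : Fin 3) = u0 := rfl
  have e1 : ![u0, u1, u2] (1 : Fin 3) = u1 := rfl
  have e2 : ![u0, u1, u2] (2 : Fin 3) = u2 := rfl
  rw [e0, e1, e2]
  calc s = X 0 * u0 + t0 := h0
    _ = X 0 * u0 + (X 1 * u1 + t1) := by rw [← h1]
    _ = X 0 * u0 + (X 1 * u1 + (X 2 * u2 + t2)) := by rw [← h2]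
    _ = _ := by rw [hc]; ring

lemma fst_hom_X (Ψ : MvPowerSeries (Fin 3) k →ₐ[k] TrivSqZeroExt k (Fin 3 → k)) (i : Fin 3) :
    (Ψ (X i)).fst = 0 := by
  by_contra h
  have hu : IsUnit ((X i : MvPowerSeries (Fin 3) k) - algebraMap k _ ((Ψ (X i)).fst)) := by
    rw [MvPowerSeries.isUnit_iff_constantCoeff, map_sub, constantCoeff_X,
      ← MvPowerSeries.c_eq_algebraMap, constantCoeff_C, zero_sub, isUnit_iff_ne_zero]
    exact neg_ne_zero.mpr h
  have := hu.map Ψ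
  rw [map_sub, AlgHom.commutes, TrivSqZeroExt.algebraMap_eq_inl,
    isUnit_iff_isUnit_fst, TrivSqZeroExt.fst_sub, TrivSqZeroExt.fst_inl, sub_self] at this
  exact not_isUnit_zero this

lemma snd_hom_mem_span (Ψ : MvPowerSeries (Fin 3) k →ₐ[k] TrivSqZeroExt k (Fin 3 → k))
    (s : MvPowerSeries (Fin 3) k) :
    (Ψ s).snd ∈ Submodule.span k {(Ψ (X 0)).snd, (Ψ (X 1)).snd, (Ψ (X 2)).snd} := by
  obtain ⟨u, hu⟩ := decomp s
  have key : ∀ (i : Fin 3) (t : MvPowerSeries (Fin 3) k),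
      (Ψ (X i * t)).snd = (Ψ t).fst • (Ψ (X i)).snd := by
    intro i t
    rw [map_mul, TrivSqZeroExt.snd_mul, fst_hom_X, zero_smul, zero_add,
      IsCentralScalar.op_smul_eq_smul]
  rw [hu, map_add, map_add, map_add, TrivSqZeroExt.snd_add, TrivSqZeroExt.snd_add,
    TrivSqZeroExt.snd_add]
  have hC : (Ψ (MvPowerSeries.C (σ := Fin 3) (R := k) (constantCoeff (σ := Fin 3) (R := k) s))).snd = 0 := by
    rw [MvPowerSeries.c_eq_algebraMap, AlgHom.commutes, TrivSqZeroExt.algebraMap_eq_inl,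
      TrivSqZeroExt.snd_inl]
  rw [hC, key 0, key 1, key 2, zero_add]
  refine Submodule.add_mem _ (Submodule.add_mem _ ?_ ?_) ?_ <;>
    refine Submodule.smul_mem _ _ (Submodule.subset_span ?_) <;> simp

lemma partB {p : ℕ} (hp : Fact p.Prime) [CharP k p] (a b c : k) (hb : b ≠ 0)
    (habc : a ^ p + b ^ p * c = 0)
    (Ψ : MvPowerSeries (Fin 3) k →ₐ[k] TrivSqZeroExt k (Fin 3 → k))
    (hsurj : Function.Surjective Ψ)
    (hker : Ψ ((((MvPolynomial.X 0 + MvPolynomial.C a) ^ p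
        + (MvPolynomial.X 1 + MvPolynomial.C b) ^ p * (MvPolynomial.X 2 + MvPolynomial.C c)
        : MvPolynomial (Fin 3) k) : MvPowerSeries (Fin 3) k)) = 0) : False := by
  classical
  haveI : CharP (TrivSqZeroExt k (Fin 3 → k)) p :=
    charP_of_injective_algebraMap
      (by rw [TrivSqZeroExt.algebraMap_eq_inl]; exact TrivSqZeroExt.inl_injective) p
  set β : Fin 3 → TrivSqZeroExt k (Fin 3 → k) := fun i => Ψ (X i) with hβdef
  have hβinr : ∀ i, β i = TrivSqZeroExt.inr ((β i).snd) := by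
    intro i
    conv_lhs => rw [← TrivSqZeroExt.inl_fst_add_inr_snd_eq (β i)]
    rw [hβdef, fst_hom_X]
    simp
  have hinrpow : ∀ v : Fin 3 → k, (TrivSqZeroExt.inr v : TrivSqZeroExt k (Fin 3 → k)) ^ p = 0 := by
    intro v
    have h2 : (TrivSqZeroExt.inr v : TrivSqZeroExt k (Fin 3 → k)) ^ 2 = 0 := by
      rw [sq, TrivSqZeroExt.inr_mul_inr]
    have hpe : p = 2 + (p - 2) := by have := hp.out.two_le; omega
    rw [hpe, pow_add, h2, zero_mul]
  have hβpow : ∀ i, (β i) ^ p = 0 := fun i => by rw [hβinr i, hinrpow]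
  have hΨC : ∀ r : k, Ψ (MvPowerSeries.C (σ := Fin 3) (R := k) r) = TrivSqZeroExt.inl r := by
    intro r
    rw [MvPowerSeries.c_eq_algebraMap, AlgHom.commutes, TrivSqZeroExt.algebraMap_eq_inl]
  have hil : ∀ r : k, (TrivSqZeroExt.inl r : TrivSqZeroExt k (Fin 3 → k)) ^ p
      = TrivSqZeroExt.inl (r ^ p) := fun r => by
    rw [← TrivSqZeroExt.inlHom_apply, ← map_pow, TrivSqZeroExt.inlHom_apply]
  have hcast : ((((MvPolynomial.X 0 + MvPolynomial.C a) ^ p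
      + (MvPolynomial.X 1 + MvPolynomial.C b) ^ p * (MvPolynomial.X 2 + MvPolynomial.C c)
      : MvPolynomial (Fin 3) k) : MvPowerSeries (Fin 3) k))
      = ((X 0 : MvPowerSeries (Fin 3) k) + MvPowerSeries.C (σ := Fin 3) (R := k) a) ^ p
        + ((X 1 : MvPowerSeries (Fin 3) k) + MvPowerSeries.C (σ := Fin 3) (R := k) b) ^ p
          * ((X 2 : MvPowerSeries (Fin 3) k) + MvPowerSeries.C (σ := Fin 3) (R := k) c) := by
    simp only [MvPolynomial.coe_add, MvPolynomial.coe_mul, MvPolynomial.coe_pow,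
      MvPolynomial.coe_X, MvPolynomial.coe_C]
  rw [hcast, map_add, map_mul, map_pow, map_pow, map_add, map_add, map_add,
    hΨC, hΨC, hΨC, add_pow_char, add_pow_char, hβpow, hβpow, zero_add, zero_add,
    hil, hil, mul_add, ← TrivSqZeroExt.inl_mul] at hker
  have hker2 : TrivSqZeroExt.inl (a ^ p + b ^ p * c)
      + TrivSqZeroExt.inl (b ^ p) * β 2 = 0 := by
    rw [TrivSqZeroExt.inl_add, ← hker]; ring
  rw [habc] at hker2
  have hker3 : TrivSqZeroExt.inl (b ^ p) * β 2 = 0 := by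
    rw [← hker2]; simp
  have hβ2 : β 2 = 0 := by
    have hu : IsUnit (TrivSqZeroExt.inl (b ^ p) : TrivSqZeroExt k (Fin 3 → k)) :=
      TrivSqZeroExt.isUnit_inl_iff.mpr ((pow_ne_zero p hb).isUnit)
    exact (IsUnit.mul_right_eq_zero hu).mp hker3
  -- every snd of the image lies in the span of two vectors
  have hspan2 : ∀ s : MvPowerSeries (Fin 3) k,
      (Ψ s).snd ∈ Submodule.span k {(β 0).snd, (β 1).snd} := by
    intro s
    have h3 := snd_hom_mem_span Ψ s
    have hle : Submodule.span k {(β 0).snd, (β 1).snd, (β 2).snd}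
        ≤ Submodule.span k {(β 0).snd, (β 1).snd} := by
      rw [Submodule.span_le]
      intro x hx
      rcases hx with h | h | h
      · exact Submodule.subset_span (by simp [h])
      · exact Submodule.subset_span (by simp [h])
      · rw [Set.mem_singleton_iff.mp h, hβ2]
        exact Submodule.zero_mem _
    exact hle h3
  have htop : Submodule.span k {(β 0).snd, (β 1).snd} = ⊤ := by
    rw [eq_top_iff]
    intro w _
    obtain ⟨s, hs⟩ := hsurj (TrivSqZeroExt.inr w)
    have := hspan2 s
    rwa [hs, TrivSqZeroExt.snd_inr] at this
  have h2 : Module.finrank k (Fin 3 → k)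
      ≤ (({(β 0).snd, (β 1).snd} : Finset (Fin 3 → k))).card := by
    have := finrank_span_finset_le_card (R := k) ({(β 0).snd, (β 1).snd} : Finset (Fin 3 → k))
    rw [Set.finrank] at this
    rw [Finset.coe_insert, Finset.coe_singleton, htop, finrank_top] at this
    exact this
  have h3 : (({(β 0).snd, (β 1).snd} : Finset (Fin 3 → k))).card ≤ 2 :=
    (Finset.card_insert_le _ _).trans (by simp)
  rw [Module.finrank_fin_fun] at h2
  omega


end Stmt15Aux

open Stmt15Aux

/-- For the Whitney umbrella `f = x^p + y^p·z` over an algebraically closed field of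
characteristic `p > 0` and a point `(a,b,c)` on `V(f)`, the complete local rings
`k⟦x,y,z⟧/(f(x+a, y+b, z+c))` and `k⟦x,y,z⟧/(f)` are isomorphic as `k`-algebras iff
`a = 0` and `b = 0`: the isosingular locus at the origin is exactly the `z`-axis. -/
theorem stmt_15 (k : Type) [Field k] [IsAlgClosed k] (p : ℕ) [CharP k p] (hp : 0 < p)
    (a b c : k) (habc : a ^ p + b ^ p * c = 0) :
    Nonempty
      ((MvPowerSeries (Fin 3) k ⧸
          Ideal.span {((translatePoly ![a, b, c]
              (MvPolynomial.X 0 ^ p + MvPolynomial.X 1 ^ p * MvPolynomial.X 2) :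
            MvPolynomial (Fin 3) k) : MvPowerSeries (Fin 3) k)}) ≃ₐ[k]
       (MvPowerSeries (Fin 3) k ⧸
          Ideal.span {((MvPolynomial.X 0 ^ p + MvPolynomial.X 1 ^ p * MvPolynomial.X 2 :
            MvPolynomial (Fin 3) k) : MvPowerSeries (Fin 3) k)})) ↔
      a = 0 ∧ b = 0 := by
  classical
  have hprime : p.Prime := (CharP.char_is_prime_or_zero k p).resolve_right (by omega)
  haveI : Fact p.Prime := ⟨hprime⟩
  set f : MvPolynomial (Fin 3) k :=
    MvPolynomial.X 0 ^ p + MvPolynomial.X 1 ^ p * MvPolynomial.X 2 with hf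
  set I : Ideal (MvPowerSeries (Fin 3) k) :=
    Ideal.span {((translatePoly ![a, b, c] f : MvPolynomial (Fin 3) k) :
      MvPowerSeries (Fin 3) k)} with hI
  set J : Ideal (MvPowerSeries (Fin 3) k) :=
    Ideal.span {((f : MvPolynomial (Fin 3) k) : MvPowerSeries (Fin 3) k)} with hJ
  have htrans : translatePoly ![a, b, c] f
      = (MvPolynomial.X 0 + MvPolynomial.C a) ^ p
        + (MvPolynomial.X 1 + MvPolynomial.C b) ^ p
          * (MvPolynomial.X 2 + MvPolynomial.C c) := by
    have e0 : ![a, b, c] 0 = a := rfl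
    have e1 : ![a, b, c] 1 = b := rfl
    have e2 : ![a, b, c] 2 = c := rfl
    rw [hf, translatePoly, map_add, map_mul, map_pow, map_pow,
      MvPolynomial.aeval_X, MvPolynomial.aeval_X, MvPolynomial.aeval_X, e0, e1, e2]
  constructor
  · rintro ⟨e⟩
    have hb : b = 0 := by
      by_contra hb
      -- Build the surjection onto the square-zero extension from the `f`-side
      have hf0 : Phi ((f : MvPolynomial (Fin 3) k) : MvPowerSeries (Fin 3) k) = 0 := by
        rw [hf, MvPolynomial.coe_add, MvPolynomial.coe_mul, MvPolynomial.coe_pow,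
          MvPolynomial.coe_pow, MvPolynomial.coe_X, MvPolynomial.coe_X, MvPolynomial.coe_X,
          map_add, map_mul, map_pow, map_pow, Phi_X, Phi_X]
        have hz : ∀ v : Fin 3 → k,
            (TrivSqZeroExt.inr v : TrivSqZeroExt k (Fin 3 → k)) ^ p = 0 := by
          intro v
          have h2 : (TrivSqZeroExt.inr v : TrivSqZeroExt k (Fin 3 → k)) ^ 2 = 0 := by
            rw [sq, TrivSqZeroExt.inr_mul_inr]
          have hpe : p = 2 + (p - 2) := by have := hprime.two_le; omega
          rw [hpe, pow_add, h2, zero_mul]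
        rw [hz, hz, zero_add, zero_mul]
      have hJ0 : ∀ s ∈ J, Phi s = 0 := by
        intro s hs
        obtain ⟨t, ht⟩ := Ideal.mem_span_singleton'.mp hs
        rw [← ht, map_mul, hf0, mul_zero]
      set Φ' := Ideal.Quotient.liftₐ J Phi hJ0 with hΦ'
      have hΦ'mk : ∀ s, Φ' (Ideal.Quotient.mk J s) = Phi s := fun s => by
        rw [hΦ']
        rfl
      set Ψ := Φ'.comp ((e : (MvPowerSeries (Fin 3) k ⧸ I) →ₐ[k]
          (MvPowerSeries (Fin 3) k ⧸ J)).comp (Ideal.Quotient.mkₐ k I)) with hΨ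
      have hΨsurj : Function.Surjective Ψ := by
        intro t
        obtain ⟨s, hs⟩ := Phi_surj t
        obtain ⟨u, hu⟩ := e.surjective (Ideal.Quotient.mk J s)
        obtain ⟨w, hw⟩ := Ideal.Quotient.mkₐ_surjective k I u
        refine ⟨w, ?_⟩
        rw [hΨ]
        simp only [AlgHom.coe_comp, Function.comp_apply, Ideal.Quotient.mkₐ_eq_mk,
          AlgEquiv.coe_algHom]
        rw [Ideal.Quotient.mkₐ_eq_mk] at hw
        rw [hw]
        show Φ' (e u) = t
        rw [hu, hΦ'mk, hs]
      have hΨg : Ψ ((((MvPolynomial.X 0 + MvPolynomial.C a) ^ p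
          + (MvPolynomial.X 1 + MvPolynomial.C b) ^ p * (MvPolynomial.X 2 + MvPolynomial.C c)
          : MvPolynomial (Fin 3) k) : MvPowerSeries (Fin 3) k)) = 0 := by
        rw [hΨ]
        simp only [AlgHom.coe_comp, Function.comp_apply, Ideal.Quotient.mkₐ_eq_mk,
          AlgEquiv.coe_algHom]
        have hmem : (((MvPolynomial.X 0 + MvPolynomial.C a) ^ p
            + (MvPolynomial.X 1 + MvPolynomial.C b) ^ p * (MvPolynomial.X 2 + MvPolynomial.C c)
            : MvPolynomial (Fin 3) k) : MvPowerSeries (Fin 3) k) ∈ I := by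
          rw [hI, ← htrans]
          exact Ideal.subset_span (Set.mem_singleton _)
        rw [Ideal.Quotient.eq_zero_iff_mem.mpr hmem, map_zero, map_zero]
      exact partB ⟨hprime⟩ a b c hb habc Ψ hΨsurj hΨg
    refine ⟨?_, hb⟩
    rw [hb, zero_pow hprime.ne_zero, zero_mul, add_zero] at habc
    exact pow_eq_zero_iff hprime.ne_zero |>.mp habc
  · rintro ⟨ha, hb⟩
    subst ha; subst hb
    obtain ⟨γ, hγ⟩ := IsAlgClosed.exists_pow_nat_eq c hp
    haveI : CharP (MvPolynomial (Fin 3) k) p :=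
      charP_of_injective_algebraMap (by
        rw [MvPolynomial.algebraMap_eq]; exact MvPolynomial.C_injective _ _) p
    have hpoly : translatePoly ![(0:k), 0, c] f = subP γ f := by
      rw [htrans, hf, subP]
      simp only [map_add, map_mul, map_pow, MvPolynomial.aeval_X, MvPolynomial.C_0, add_zero]
      have e0 : ![MvPolynomial.X 0 + MvPolynomial.C γ * MvPolynomial.X 1, MvPolynomial.X 1,
          (MvPolynomial.X 2 : MvPolynomial (Fin 3) k)] 0
          = MvPolynomial.X 0 + MvPolynomial.C γ * MvPolynomial.X 1 := rfl
      have e1 : ![MvPolynomial.X 0 + MvPolynomial.C γ * MvPolynomial.X 1, MvPolynomial.X 1,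
          (MvPolynomial.X 2 : MvPolynomial (Fin 3) k)] 1 = MvPolynomial.X 1 := rfl
      have e2 : ![MvPolynomial.X 0 + MvPolynomial.C γ * MvPolynomial.X 1, MvPolynomial.X 1,
          (MvPolynomial.X 2 : MvPolynomial (Fin 3) k)] 2 = MvPolynomial.X 2 := rfl
      rw [e0, e1, e2, add_pow_char, mul_pow, ← map_pow, hγ]
      ring
    have hmapI : I = Ideal.map ((sigEquiv γ : MvPowerSeries (Fin 3) k ≃ₐ[k]
        MvPowerSeries (Fin 3) k) : MvPowerSeries (Fin 3) k →+* MvPowerSeries (Fin 3) k) J := by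
      rw [hI, hJ, Ideal.map_span, Set.image_singleton]
      congr 1
      have : ((sigEquiv γ : MvPowerSeries (Fin 3) k ≃ₐ[k] MvPowerSeries (Fin 3) k) :
          MvPowerSeries (Fin 3) k →+* MvPowerSeries (Fin 3) k)
            ((f : MvPolynomial (Fin 3) k) : MvPowerSeries (Fin 3) k)
          = ((subP γ f : MvPolynomial (Fin 3) k) : MvPowerSeries (Fin 3) k) :=
        sigEquiv_poly γ f
      rw [this, ← hpoly]
    exact ⟨(Ideal.quotientEquivAlg J I (sigEquiv γ) hmapI).symm⟩
end

section
/- Let k be a field of characteristic p > 0 and let f = x^p + y^p·z ∈ k⟦x,y,z⟧. Then every k-linear derivation d : k⟦x,y,z⟧ → k⟦x,y,z⟧ satisfying d(f) ∈ (f) also satisfies d(z) ∈ (f); in particular the constant term of d(z) is 0, so no derivation preserving the ideal (f) has d(z) a unit. -/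
open MvPowerSeries

noncomputable section StmtAux

variable {k : Type} [Field k]

/-- The underlying function of the "set `y = 0`" map on `k⟦x,y,z⟧`. -/
def setY0Fun (k : Type) [Field k] (φ : MvPowerSeries (Fin 3) k) : MvPowerSeries (Fin 3) k :=
  fun m => if m 1 = 0 then coeff m φ else 0

theorem coeff_setY0Fun (φ : MvPowerSeries (Fin 3) k) (m : Fin 3 →₀ ℕ) :
    coeff m (setY0Fun k φ) = if m 1 = 0 then coeff m φ else 0 := rfl

/-- The "set `y = 0`" ring homomorphism on `k⟦x,y,z⟧`. -/
def setY0 (k : Type) [Field k] : MvPowerSeries (Fin 3) k →+* MvPowerSeries (Fin 3) k where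
  toFun := setY0Fun k
  map_one' := by
    ext m
    rw [coeff_setY0Fun]
    split_ifs with h
    · rfl
    · rw [coeff_one, if_neg]
      intro hm
      exact h (by simp [hm])
  map_mul' a b := by
    ext m
    show coeff m (setY0Fun k (a * b)) = coeff m (setY0Fun k a * setY0Fun k b)
    rw [coeff_setY0Fun, coeff_mul]
    split_ifs with h
    · rw [coeff_mul]
      refine Finset.sum_congr rfl ?_
      rintro ⟨i, j⟩ hij
      replace hij : i + j = m := by simpa [Finset.mem_antidiagonal] using hij
      have hij1 : i 1 + j 1 = 0 := by
        have := congrArg (fun f : Fin 3 →₀ ℕ => f 1) hij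
        simpa [h] using this
      have hi : i 1 = 0 := Nat.eq_zero_of_add_eq_zero_right hij1
      have hj : j 1 = 0 := Nat.eq_zero_of_add_eq_zero_left hij1
      rw [coeff_setY0Fun, coeff_setY0Fun, if_pos hi, if_pos hj]
    · symm
      refine Finset.sum_eq_zero ?_
      rintro ⟨i, j⟩ hij
      have hijm : i + j = m := by simpa [Finset.mem_antidiagonal] using hij
      have hij1 : i 1 + j 1 = m 1 := by
        have := congrArg (fun f : Fin 3 →₀ ℕ => f 1) hijm
        simpa using this
      by_cases hi : i 1 = 0
      · have hj : j 1 ≠ 0 := by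
          intro hj
          exact h (by rw [← hij1, hi, hj])
        rw [coeff_setY0Fun (m := j), if_neg hj, mul_zero]
      · rw [coeff_setY0Fun (m := i), if_neg hi, zero_mul]
  map_zero' := by
    ext m
    rw [coeff_setY0Fun, coeff_zero]
    split_ifs <;> rfl
  map_add' a b := by
    ext m
    show coeff m (setY0Fun k (a + b)) = coeff m (setY0Fun k a + setY0Fun k b)
    rw [coeff_setY0Fun, map_add, map_add, coeff_setY0Fun, coeff_setY0Fun]
    split_ifs <;> simp

theorem coeff_setY0 (φ : MvPowerSeries (Fin 3) k) (m : Fin 3 →₀ ℕ) :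
    coeff m (setY0 k φ) = if m 1 = 0 then coeff m φ else 0 := rfl

theorem setY0_X_of_ne {i : Fin 3} (hi : i ≠ 1) : setY0 k (X i) = X i := by
  ext m
  rw [coeff_setY0]
  split_ifs with h
  · rfl
  · rw [coeff_X, if_neg]
    intro hm
    apply h
    rw [hm]
    simp [Finsupp.single_apply, hi]

theorem setY0_X1 : setY0 k (X 1) = 0 := by
  ext m
  rw [coeff_setY0, coeff_zero]
  split_ifs with h
  · rw [coeff_X, if_neg]
    intro hm
    rw [hm] at h
    simp at h
  · rfl

theorem X_ne_zero' (s : Fin 3) : (X s : MvPowerSeries (Fin 3) k) ≠ 0 := by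
  intro h
  have := congrArg (coeff (Finsupp.single s 1)) h
  rw [coeff_zero, coeff_X, if_pos rfl] at this
  exact one_ne_zero this

/-- Key lemma: if `y^n · h = f · g` with `f = x^p + y^p z`, then `f ∣ h`. -/
theorem key_dvd (p : ℕ) (hp : 0 < p) :
    ∀ (n : ℕ) (g h : MvPowerSeries (Fin 3) k),
      (X 1) ^ n * h = ((X 0) ^ p + (X 1) ^ p * X 2) * g →
      ((X 0) ^ p + (X 1) ^ p * X 2 : MvPowerSeries (Fin 3) k) ∣ h := by
  intro n
  induction n with
  | zero =>
    intro g h hgh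
    rw [pow_zero, one_mul] at hgh
    exact ⟨g, hgh⟩
  | succ n ih =>
    intro g h hgh
    -- apply setY0 to both sides
    have h0 : (0 : MvPowerSeries (Fin 3) k) = (X 0) ^ p * setY0 k g := by
      have := congrArg (setY0 k) hgh
      simp only [map_mul, map_add, map_pow, setY0_X1,
        setY0_X_of_ne (show (0 : Fin 3) ≠ 1 by decide),
        setY0_X_of_ne (show (2 : Fin 3) ≠ 1 by decide),
        zero_pow hp.ne', zero_pow (Nat.succ_ne_zero n), zero_mul, mul_zero,
        add_zero] at this
      exact this
    have hg0 : setY0 k g = 0 := by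
      rcases mul_eq_zero.mp h0.symm with h' | h'
      · exact absurd h' (pow_ne_zero _ (X_ne_zero' 0))
      · exact h'
    have hdvd : (X 1 : MvPowerSeries (Fin 3) k) ∣ g := by
      rw [X_dvd_iff]
      intro m hm
      have := congrArg (coeff m) hg0
      rwa [coeff_setY0, if_pos hm, coeff_zero] at this
    obtain ⟨g1, rfl⟩ := hdvd
    apply ih g1
    apply mul_left_cancel₀ (X_ne_zero' (1 : Fin 3))
    calc X 1 * ((X 1) ^ n * h) = (X 1) ^ (n + 1) * h := by ring
    _ = ((X 0) ^ p + (X 1) ^ p * X 2) * (X 1 * g1) := hgh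
    _ = X 1 * (((X 0) ^ p + (X 1) ^ p * X 2) * g1) := by ring

end StmtAux

/-- Let `f = x^p + y^p·z` over a field of characteristic `p > 0`.  Every `k`-linear
derivation `d` of `k⟦x,y,z⟧` with `d f ∈ (f)` satisfies `d z ∈ (f)`; in particular the
constant term of `d z` is `0`, so `d z` is not a unit. -/
theorem stmt_16 (k : Type) [Field k] (p : ℕ) [CharP k p] (hp : 0 < p)
    (d : Derivation k (MvPowerSeries (Fin 3) k) (MvPowerSeries (Fin 3) k))
    (hd : d ((X 0) ^ p + (X 1) ^ p * X 2) ∈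
      Ideal.span {((X 0) ^ p + (X 1) ^ p * X 2 : MvPowerSeries (Fin 3) k)}) :
    d (X 2) ∈ Ideal.span {((X 0) ^ p + (X 1) ^ p * X 2 : MvPowerSeries (Fin 3) k)} ∧
    constantCoeff (d (X 2)) = 0 ∧
    ¬ IsUnit (d (X 2)) := by
  have hpz : (p : MvPowerSeries (Fin 3) k) = 0 := by
    have : (C : k →+* MvPowerSeries (Fin 3) k) ((p : ℕ) : k) = ((p : ℕ) : MvPowerSeries (Fin 3) k) :=
      map_natCast (C : k →+* MvPowerSeries (Fin 3) k) p
    rw [CharP.cast_eq_zero k p, map_zero] at this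
    exact this.symm
  -- compute d f
  have hdf : d ((X 0) ^ p + (X 1) ^ p * X 2) = (X 1) ^ p * d (X 2) := by
    rw [map_add, Derivation.leibniz, Derivation.leibniz_pow, Derivation.leibniz_pow,
      nsmul_eq_mul, nsmul_eq_mul, hpz, zero_mul, zero_mul, smul_zero, zero_add, add_zero,
      smul_eq_mul]
  rw [hdf] at hd
  rw [Ideal.mem_span_singleton'] at hd
  obtain ⟨g, hg⟩ := hd
  have hdvd : ((X 0) ^ p + (X 1) ^ p * X 2 : MvPowerSeries (Fin 3) k) ∣ d (X 2) :=
    key_dvd p hp p g (d (X 2)) (by rw [← hg]; ring)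
  have hcc0 : constantCoeff
      ((X 0) ^ p + (X 1) ^ p * X 2 : MvPowerSeries (Fin 3) k) = 0 := by
    simp [hp.ne']
  obtain ⟨c, hc⟩ := hdvd
  refine ⟨Ideal.mem_span_singleton.mpr ⟨c, hc⟩, ?_, ?_⟩
  · rw [hc, map_mul, hcc0, zero_mul]
  · intro hu
    have := isUnit_constantCoeff _ hu
    rw [hc, map_mul, hcc0, zero_mul] at this
    exact this.ne_zero rfl
end

section
/- Let k be a field of characteristic 2 and let f̃ = x² + y³ + z·y² ∈ k⟦x,y,z⟧. Then there is no k-linear derivation d : k⟦x,y,z⟧ → k⟦x,y,z⟧ satisfying d(f̃) ∈ (f̃) and whose values have constant terms d(x)(0) = 0, d(y)(0) = 0 and d(z)(0) = 1. -/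
open MvPowerSeries Finsupp

/-- Let `f̃ = x² + y³ + z·y²` over a field of characteristic `2`.  There is no `k`-linear
derivation `d` of `k⟦x,y,z⟧` with `d f̃ ∈ (f̃)` whose values have constant terms
`d x (0) = 0`, `d y (0) = 0` and `d z (0) = 1`. -/
theorem stmt_18 (k : Type) [Field k] [CharP k 2] :
    ¬ ∃ d : Derivation k (MvPowerSeries (Fin 3) k) (MvPowerSeries (Fin 3) k),
      d ((X 0) ^ 2 + (X 1) ^ 3 + X 2 * (X 1) ^ 2) ∈
        Ideal.span {((X 0) ^ 2 + (X 1) ^ 3 + X 2 * (X 1) ^ 2 : MvPowerSeries (Fin 3) k)} ∧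
      constantCoeff (σ := Fin 3) (R := k) (d (X 0)) = 0 ∧
      constantCoeff (σ := Fin 3) (R := k) (d (X 1)) = 0 ∧
      constantCoeff (σ := Fin 3) (R := k) (d (X 2)) = 1 := by
  rintro ⟨d, hmem, h0, h1, h2⟩
  obtain ⟨g, hg⟩ := Ideal.mem_span_singleton'.mp hmem
  have h2' : (2 : k) = 0 := by exact_mod_cast CharP.cast_eq_zero k 2
  have htwo : (2 : MvPowerSeries (Fin 3) k) = 0 := by
    rw [show (2 : MvPowerSeries (Fin 3) k) = algebraMap k _ 2 from (map_ofNat _ 2).symm, h2',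
      map_zero]
  -- Compute `d f = y² (d y + d z)` using char 2.
  have hdf : d ((X 0) ^ 2 + (X 1) ^ 3 + X 2 * (X 1) ^ 2)
      = X 1 ^ 2 * (d (X 1) + d (X 2)) := by
    simp only [map_add, Derivation.leibniz, Derivation.leibniz_pow, smul_eq_mul, smul_smul]
    simp only [nsmul_eq_mul]
    push_cast
    rw [show (3 : MvPowerSeries (Fin 3) k) = 2 + 1 by norm_num, htwo]
    ring
  -- Coefficient of `y²` on the left-hand side is `1`.
  have hL : (coeff (R := k) (single 1 2)) (X 1 ^ 2 * (d (X 1) + d (X 2))) = 1 := by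
    rw [X_pow_eq, coeff_monomial_mul, if_pos le_rfl, tsub_self, one_mul,
      coeff_zero_eq_constantCoeff, map_add, h1, h2, zero_add]
  -- Coefficient of `y²` on the right-hand side is `0`.
  have hR : (coeff (R := k) (single 1 2)) (g * ((X 0) ^ 2 + (X 1) ^ 3 + X 2 * (X 1) ^ 2)) = 0 := by
    rw [coeff_mul]
    apply Finset.sum_eq_zero
    rintro ⟨p, q⟩ hpq
    rw [Finset.HasAntidiagonal.mem_antidiagonal] at hpq
    have hq0 : q 0 = 0 := by
      have := congrFun (congrArg DFunLike.coe hpq) 0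
      simp [single_apply] at this; omega
    have hq2 : q 2 = 0 := by
      have := congrFun (congrArg DFunLike.coe hpq) 2
      simp [single_apply] at this; omega
    have hq1 : q 1 ≤ 2 := by
      have := congrFun (congrArg DFunLike.coe hpq) 1
      simp [single_apply] at this; omega
    have e1 : (X 0 : MvPowerSeries (Fin 3) k) ^ 2 = monomial (R := k) (single 0 2) 1 := X_pow_eq 0 2
    have e2 : (X 1 : MvPowerSeries (Fin 3) k) ^ 3 = monomial (R := k) (single 1 3) 1 := X_pow_eq 1 3
    have e3 : (X 2 : MvPowerSeries (Fin 3) k) * X 1 ^ 2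
        = monomial (R := k) (single 2 1 + single 1 2) 1 := by
      rw [X_pow_eq, X, monomial_mul_monomial, one_mul]
    have : (coeff (R := k) q) ((X 0 : MvPowerSeries (Fin 3) k) ^ 2 + (X 1) ^ 3 + X 2 * (X 1) ^ 2)
        = 0 := by
      rw [e1, e2, e3, map_add, map_add, coeff_monomial, coeff_monomial, coeff_monomial,
        if_neg, if_neg, if_neg] <;> simp_all
      · intro h; rw [h] at hq2; simp [single_apply] at hq2
      · intro h; rw [h] at hq1; simp [single_apply] at hq1
      · intro h; rw [h] at hq0; simp [single_apply] at hq0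
    rw [this, mul_zero]
  rw [← hdf, ← hg, hR] at hL
  exact zero_ne_one hL
end

section
/- Let k be an algebraically closed field of characteristic 2 and let f̃ = x² + y³ + z·y² ∈ k[x,y,z]. Let (a,b,c) ∈ k³ satisfy a² + b³ + c·b² = 0. Then the k-algebras k⟦x,y,z⟧/(f̃(x+a, y+b, z+c)) and k⟦x,y,z⟧/(f̃) are isomorphic if and only if a = 0 and b = 0. In other words, the isosingular locus at the origin of the hypersurface defined by f̃ consists exactly of the points of the z-axis. -/
open MvPowerSeries

namespace Stmt19Aux

variable {k : Type} [Field k]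

/-- The maximal ideal of the power series ring: kernel of the constant coefficient. -/
noncomputable def MM (k : Type) [Field k] : Ideal (MvPowerSeries (Fin 3) k) :=
  RingHom.ker (constantCoeff (σ := Fin 3) (R := k))

lemma mem_MM {W : MvPowerSeries (Fin 3) k} :
    W ∈ MM k ↔ constantCoeff (σ := Fin 3) (R := k) W = 0 := RingHom.mem_ker

lemma antidiagonal_single (j : Fin 3) :
    Finset.HasAntidiagonal.antidiagonal (Finsupp.single j 1 : Fin 3 →₀ ℕ) =
      {((0 : Fin 3 →₀ ℕ), Finsupp.single j 1), (Finsupp.single j 1, 0)} := by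
  ext ⟨p, q⟩
  simp only [Finset.HasAntidiagonal.mem_antidiagonal, Finset.mem_insert, Finset.mem_singleton, Prod.mk.injEq]
  constructor
  · intro h
    have hj : p j + q j = 1 := by
      have := congrFun (congrArg (fun f : Fin 3 →₀ ℕ => (f : Fin 3 → ℕ)) h) j
      simpa using this
    have hother : ∀ i : Fin 3, i ≠ j → p i = 0 ∧ q i = 0 := by
      intro i hi
      have := congrFun (congrArg (fun f : Fin 3 →₀ ℕ => (f : Fin 3 → ℕ)) h) i
      simp only [Finsupp.coe_add, Pi.add_apply, Finsupp.single_apply] at this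
      rw [if_neg (fun hh => hi hh.symm)] at this
      omega
    rcases Nat.eq_zero_or_pos (p j) with hp | hp
    · left
      constructor
      · ext i
        by_cases hi : i = j
        · subst hi; simpa using hp
        · simpa using (hother i hi).1
      · ext i
        by_cases hi : i = j
        · subst hi; simp only [Finsupp.single_eq_same]; omega
        · rw [Finsupp.single_apply, if_neg (fun hh => hi hh.symm)]
          exact (hother i hi).2
    · right
      have hq : q j = 0 := by omega
      constructor
      · ext i
        by_cases hi : i = j
        · subst hi; simp only [Finsupp.single_eq_same]; omega
        · rw [Finsupp.single_apply, if_neg (fun hh => hi hh.symm)]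
          exact (hother i hi).1
      · ext i
        by_cases hi : i = j
        · subst hi; simpa using hq
        · simpa using (hother i hi).2
  · rintro (⟨rfl, rfl⟩ | ⟨rfl, rfl⟩) <;> simp

lemma coeff_single_mul (F G : MvPowerSeries (Fin 3) k) (j : Fin 3) :
    coeff (R := k) (Finsupp.single j 1) (F * G) =
      constantCoeff (σ := Fin 3) (R := k) F * coeff (R := k) (Finsupp.single j 1) G +
      coeff (R := k) (Finsupp.single j 1) F * constantCoeff (σ := Fin 3) (R := k) G := by
  classical
  rw [coeff_mul, antidiagonal_single j, Finset.sum_pair]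
  · simp [coeff_zero_eq_constantCoeff]
  · intro h
    have := congrArg Prod.fst h
    simp only at this
    have := congrFun (congrArg (fun f : Fin 3 →₀ ℕ => (f : Fin 3 → ℕ)) this) j
    simp at this

lemma MM_sq_coeff_single {W : MvPowerSeries (Fin 3) k} (hW : W ∈ (MM k) ^ 2) (j : Fin 3) :
    coeff (R := k) (Finsupp.single j 1) W = 0 := by
  rw [pow_two] at hW
  refine Submodule.mul_induction_on hW ?_ ?_
  · intro F hF G hG
    rw [coeff_single_mul, mem_MM.mp hF, mem_MM.mp hG]
    ring
  · intro x y hx hy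
    rw [map_add, hx, hy, add_zero]

lemma MM_sq_le : (MM k) ^ 2 ≤ MM k := by
  rw [pow_two]
  exact Ideal.mul_le_left

lemma MM_sq_constantCoeff {W : MvPowerSeries (Fin 3) k} (hW : W ∈ (MM k) ^ 2) :
    constantCoeff (σ := Fin 3) (R := k) W = 0 := mem_MM.mp (MM_sq_le hW)

lemma mul_mem_MM_sq {A B : MvPowerSeries (Fin 3) k}
    (hA : constantCoeff (σ := Fin 3) (R := k) A = 0) (hB : constantCoeff (σ := Fin 3) (R := k) B = 0) :
    A * B ∈ (MM k) ^ 2 := by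
  rw [pow_two]
  exact Ideal.mul_mem_mul (mem_MM.mpr hA) (mem_MM.mpr hB)

lemma X_mem_MM (i : Fin 3) : (X i : MvPowerSeries (Fin 3) k) ∈ MM k :=
  mem_MM.mpr (constantCoeff_X i)


/-- A series whose constant and linear coefficients vanish lies in the square of the
maximal ideal. -/
lemma ord2_mem_MM_sq {W : MvPowerSeries (Fin 3) k}
    (h0 : constantCoeff (σ := Fin 3) (R := k) W = 0)
    (h1 : ∀ j : Fin 3, coeff (R := k) (Finsupp.single j 1) W = 0) :
    W ∈ (MM k : Ideal _) ^ 2 := by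
  classical
  set A0 : MvPowerSeries (Fin 3) k :=
    fun n => if n 0 ≠ 0 then coeff (R := k) n W else 0 with hA0
  set A1 : MvPowerSeries (Fin 3) k :=
    fun n => if n 0 = 0 ∧ n 1 ≠ 0 then coeff (R := k) n W else 0 with hA1
  set A2 : MvPowerSeries (Fin 3) k :=
    fun n => if n 0 = 0 ∧ n 1 = 0 ∧ n 2 ≠ 0 then coeff (R := k) n W else 0 with hA2
  have cA0 : ∀ n : Fin 3 →₀ ℕ, coeff (R := k) n A0 = if n 0 ≠ 0 then coeff (R := k) n W else 0 := fun n => rfl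
  have cA1 : ∀ n : Fin 3 →₀ ℕ, coeff (R := k) n A1 =
      if n 0 = 0 ∧ n 1 ≠ 0 then coeff (R := k) n W else 0 := fun n => rfl
  have cA2 : ∀ n : Fin 3 →₀ ℕ, coeff (R := k) n A2 =
      if n 0 = 0 ∧ n 1 = 0 ∧ n 2 ≠ 0 then coeff (R := k) n W else 0 := fun n => rfl
  have hsplit : W = A0 + A1 + A2 := by
    ext n
    rw [map_add, map_add, cA0, cA1, cA2]
    by_cases h00 : n 0 = 0
    · by_cases h11 : n 1 = 0
      · by_cases h22 : n 2 = 0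
        · have : n = 0 := by
            ext i
            fin_cases i <;> assumption
          rw [this]
          simp only [Finsupp.coe_zero, Pi.zero_apply, ne_eq, not_true_eq_false, if_false,
            and_false, false_and, if_false]
          rw [coeff_zero_eq_constantCoeff_apply, h0]
          simp
        · simp [h00, h11, h22]
      · simp [h00, h11]
    · simp [h00]
  -- each piece is divisible by the corresponding variable
  have hdvd : ∀ (A : MvPowerSeries (Fin 3) k) (i : Fin 3),
      (∀ m : Fin 3 →₀ ℕ, m i = 0 → coeff (R := k) m A = 0) →
      coeff (R := k) (Finsupp.single i 1) A = 0 →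
      A ∈ (MM k : Ideal _) ^ 2 := by
    intro A i hvan hlin
    have : (X i : MvPowerSeries (Fin 3) k) ^ 1 ∣ A := by
      rw [X_pow_dvd_iff]
      intro m hm
      exact hvan m (by omega)
    rw [pow_one] at this
    obtain ⟨B, hB⟩ := this
    have hcB : constantCoeff (σ := Fin 3) (R := k) B = 0 := by
      have := coeff_single_mul (X i) B i
      rw [← hB, hlin, constantCoeff_X, zero_mul, zero_add] at this
      rw [coeff_X, if_pos rfl, one_mul] at this
      exact this.symm
    rw [hB]
    exact mul_mem_MM_sq (constantCoeff_X i) hcB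
  rw [hsplit]
  refine add_mem (add_mem ?_ ?_) ?_
  · refine hdvd A0 0 (fun m hm => ?_) ?_
    · rw [cA0]; simp [hm]
    · rw [cA0, if_pos (by simp), h1 0]
  · refine hdvd A1 1 (fun m hm => ?_) ?_
    · rw [cA1]; simp [hm]
    · rw [cA1]
      rw [if_pos ⟨by simp [Finsupp.single_apply], by simp⟩, h1 1]
  · refine hdvd A2 2 (fun m hm => ?_) ?_
    · rw [cA2]; simp [hm]
    · rw [cA2]
      rw [if_pos ⟨by simp [Finsupp.single_apply], by simp [Finsupp.single_apply], by simp⟩, h1 2]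


/-- The linear substitution x ↦ x + s·y. -/
noncomputable def subsFun (s : k) : Fin 3 → MvPolynomial (Fin 3) k :=
  fun i => if i = 0 then MvPolynomial.X 0 + MvPolynomial.C s * MvPolynomial.X 1
    else MvPolynomial.X i

lemma subsFun_hom (s : k) (i : Fin 3) : (subsFun s i).IsHomogeneous 1 := by
  unfold subsFun
  split_ifs
  · exact (MvPolynomial.isHomogeneous_X _ _).add (MvPolynomial.isHomogeneous_C_mul_X s 1)
  · exact MvPolynomial.isHomogeneous_X _ _

/-- Vanishing: if all coefficients of `P` in total degree `n.degree` vanish, then the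
coefficient of the substituted polynomial at `n` vanishes. -/
lemma coeff_aeval_subs_eq_zero (s : k) (P : MvPolynomial (Fin 3) k) (n : Fin 3 →₀ ℕ)
    (h : ∀ d : Fin 3 →₀ ℕ, d.degree = n.degree → MvPolynomial.coeff d P = 0) :
    MvPolynomial.coeff n (MvPolynomial.aeval (subsFun s) P) = 0 := by
  conv_lhs => rw [← MvPolynomial.sum_homogeneousComponent P]
  rw [map_sum, MvPolynomial.coeff_sum]
  refine Finset.sum_eq_zero fun i _ => ?_
  by_cases hi : i = n.degree
  · subst hi
    have hzero : MvPolynomial.homogeneousComponent n.degree P = 0 := by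
      apply MvPolynomial.ext
      intro d
      rw [MvPolynomial.coeff_homogeneousComponent, MvPolynomial.coeff_zero]
      split_ifs with hd
      · exact h d hd
      · rfl
    rw [hzero, map_zero, MvPolynomial.coeff_zero]
  · have hh := (MvPolynomial.homogeneousComponent_isHomogeneous i P).aeval
      (subsFun s) (subsFun_hom s)
    rw [one_mul] at hh
    exact hh.coeff_eq_zero (fun hc => hi hc.symm)

/-- A componentwise truncation bound that contains all monomials of degree `≤ d`. -/
noncomputable def bnd (d : ℕ) : Fin 3 →₀ ℕ :=
  Finsupp.single 0 (d + 1) + Finsupp.single 1 (d + 1) + Finsupp.single 2 (d + 1)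

lemma bnd_apply (d : ℕ) (j : Fin 3) : bnd d j = d + 1 := by
  fin_cases j <;> simp [bnd, Finsupp.single_apply]

lemma apply_le_degree (m : Fin 3 →₀ ℕ) (j : Fin 3) : m j ≤ m.degree := by
  by_cases hj : j ∈ m.support
  · exact Finset.single_le_sum (fun _ _ => Nat.zero_le _) hj
  · simp [Finsupp.notMem_support_iff.mp hj]

lemma lt_bnd {m : Fin 3 →₀ ℕ} {d : ℕ} (h : m.degree ≤ d) : m < bnd d := by
  rw [lt_iff_le_and_ne]
  constructor
  · intro j
    rw [bnd_apply]
    exact le_trans (le_trans (apply_le_degree m j) h) (Nat.le_succ d)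
  · intro hc
    have := congrFun (congrArg (fun f : Fin 3 →₀ ℕ => (f : Fin 3 → ℕ)) hc) 0
    simp only [bnd_apply] at this
    have h0 : m 0 ≤ d := le_trans (apply_le_degree m 0) h
    omega

lemma bnd_ne_zero (d : ℕ) : bnd d ≠ 0 := by
  intro h
  have h0 : bnd d 0 = 0 := by rw [h]; simp
  rw [bnd_apply] at h0
  simp at h0

/-- The substitution map on power series, defined coefficientwise via truncations. -/
noncomputable def phiFun (s : k) (F : MvPowerSeries (Fin 3) k) : MvPowerSeries (Fin 3) k :=
  fun n => MvPolynomial.coeff n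
    (MvPolynomial.aeval (subsFun s) (trunc k (bnd n.degree) F))

lemma coeff_phiFun (s : k) (F : MvPowerSeries (Fin 3) k) (n : Fin 3 →₀ ℕ) (N : Fin 3 →₀ ℕ)
    (hN : ∀ m : Fin 3 →₀ ℕ, m.degree ≤ n.degree → m < N) :
    coeff (R := k) n (phiFun s F) =
      MvPolynomial.coeff n (MvPolynomial.aeval (subsFun s) (trunc k N F)) := by
  have key : MvPolynomial.coeff n (MvPolynomial.aeval (subsFun s)
      (trunc k N F - trunc k (bnd n.degree) F)) = 0 := by
    apply coeff_aeval_subs_eq_zero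
    intro d hd
    rw [MvPolynomial.coeff_sub, coeff_trunc, coeff_trunc,
      if_pos (hN d (le_of_eq hd)), if_pos (lt_bnd (le_of_eq hd)), sub_self]
  rw [map_sub, MvPolynomial.coeff_sub, sub_eq_zero] at key
  exact key.symm

lemma coeff_phiFun_self (s : k) (F : MvPowerSeries (Fin 3) k) (n : Fin 3 →₀ ℕ) :
    coeff (R := k) n (phiFun s F) =
      MvPolynomial.coeff n (MvPolynomial.aeval (subsFun s) (trunc k (bnd n.degree) F)) := rfl

lemma phiFun_add (s : k) (F G : MvPowerSeries (Fin 3) k) :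
    phiFun s (F + G) = phiFun s F + phiFun s G := by
  ext n
  rw [map_add, coeff_phiFun_self, coeff_phiFun_self, coeff_phiFun_self,
    map_add, map_add, MvPolynomial.coeff_add]

lemma phiFun_one (s : k) : phiFun s (1 : MvPowerSeries (Fin 3) k) = 1 := by
  ext n
  rw [coeff_phiFun_self, trunc_one _ (bnd_ne_zero _), map_one, MvPolynomial.coeff_one,
    coeff_one]
  simp [eq_comm]

lemma degree_eq_sum_univ (m : Fin 3 →₀ ℕ) : m.degree = ∑ i : Fin 3, m i :=
  Finset.sum_subset (Finset.subset_univ _)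
    (fun i _ hi => Finsupp.notMem_support_iff.mp hi)

lemma degree_le_of_le {p d : Fin 3 →₀ ℕ} (h : p ≤ d) : p.degree ≤ d.degree := by
  rw [degree_eq_sum_univ, degree_eq_sum_univ]
  exact Finset.sum_le_sum fun i _ => h i

lemma phiFun_mul (s : k) (F G : MvPowerSeries (Fin 3) k) :
    phiFun s (F * G) = phiFun s F * phiFun s G := by
  classical
  ext n
  set N := bnd n.degree with hNdef
  have hN : ∀ m : Fin 3 →₀ ℕ, m.degree ≤ n.degree → m < N := fun m hm => lt_bnd hm
  -- step 1: replace trunc (F*G) by trunc F * trunc G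
  have step1 : coeff (R := k) n (phiFun s (F * G)) =
      MvPolynomial.coeff n (MvPolynomial.aeval (subsFun s) (trunc k N F * trunc k N G)) := by
    rw [coeff_phiFun_self]
    have key : MvPolynomial.coeff n (MvPolynomial.aeval (subsFun s)
        (trunc k N (F * G) - trunc k N F * trunc k N G)) = 0 := by
      apply coeff_aeval_subs_eq_zero
      intro d hd
      rw [MvPolynomial.coeff_sub, coeff_trunc, if_pos (hN d (le_of_eq hd)),
        MvPolynomial.coeff_mul, coeff_mul, sub_eq_zero]
      refine Finset.sum_congr rfl fun ⟨p, q⟩ hpq => ?_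
      rw [Finset.HasAntidiagonal.mem_antidiagonal] at hpq
      have hp : p < N := hN p (le_trans (degree_le_of_le (by rw [← hpq]; exact le_add_right le_rfl)) (le_of_eq hd))
      have hq : q < N := hN q (le_trans (degree_le_of_le (by rw [← hpq]; exact le_add_left le_rfl)) (le_of_eq hd))
      rw [coeff_trunc, coeff_trunc, if_pos hp, if_pos hq]
    rw [map_sub, MvPolynomial.coeff_sub, sub_eq_zero] at key
    exact key
  rw [step1, map_mul, MvPolynomial.coeff_mul, coeff_mul]
  refine Finset.sum_congr rfl fun ⟨p, q⟩ hpq => ?_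
  rw [Finset.HasAntidiagonal.mem_antidiagonal] at hpq
  have hp : p.degree ≤ n.degree := degree_le_of_le (by rw [← hpq]; exact le_add_right le_rfl)
  have hq : q.degree ≤ n.degree := degree_le_of_le (by rw [← hpq]; exact le_add_left le_rfl)
  rw [coeff_phiFun s F p N (fun m hm => hN m (le_trans hm hp)),
    coeff_phiFun s G q N (fun m hm => hN m (le_trans hm hq))]

lemma phiFun_C (s : k) (r : k) :
    phiFun s (C (σ := Fin 3) (R := k) r) = C (σ := Fin 3) (R := k) r := by
  ext n
  rw [coeff_phiFun_self, trunc_C _ (bnd_ne_zero _), MvPolynomial.aeval_C]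
  rw [MvPolynomial.algebraMap_eq, MvPolynomial.coeff_C, coeff_C]
  simp [eq_comm]


-- new material
lemma phiFun_zero (s : k) : phiFun s (0 : MvPowerSeries (Fin 3) k) = 0 := by
  ext n
  rw [coeff_phiFun_self, map_zero, map_zero, MvPolynomial.coeff_zero, map_zero]

/-- On (coercions of) polynomials, `phiFun` is the polynomial substitution. -/
lemma phiFun_coe (s : k) (P : MvPolynomial (Fin 3) k) :
    phiFun s (P : MvPowerSeries (Fin 3) k) =
      ((MvPolynomial.aeval (subsFun s) P : MvPolynomial (Fin 3) k) : MvPowerSeries (Fin 3) k) := by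
  ext n
  rw [coeff_phiFun_self, MvPolynomial.coeff_coe]
  have key : MvPolynomial.coeff n (MvPolynomial.aeval (subsFun s)
      (trunc k (bnd n.degree) (P : MvPowerSeries (Fin 3) k) - P)) = 0 := by
    apply coeff_aeval_subs_eq_zero
    intro d hd
    rw [MvPolynomial.coeff_sub, coeff_trunc, if_pos (lt_bnd (le_of_eq hd)),
      MvPolynomial.coeff_coe, sub_self]
  rw [map_sub, MvPolynomial.coeff_sub, sub_eq_zero] at key
  exact key

lemma aeval_subs_subs [CharP k 2] (s : k) (P : MvPolynomial (Fin 3) k) :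
    MvPolynomial.aeval (subsFun s) (MvPolynomial.aeval (subsFun s) P) = P := by
  have hcomp : (MvPolynomial.aeval (subsFun s)).comp (MvPolynomial.aeval (subsFun s)) =
      AlgHom.id k (MvPolynomial (Fin 3) k) := by
    apply MvPolynomial.algHom_ext
    intro i
    by_cases hi : i = 0
    · subst hi
      have h0 : subsFun s (0 : Fin 3) =
          MvPolynomial.X 0 + MvPolynomial.C s * MvPolynomial.X 1 := if_pos rfl
      have h1 : subsFun s (1 : Fin 3) = MvPolynomial.X 1 := if_neg (by decide)
      simp only [AlgHom.comp_apply, MvPolynomial.aeval_X, AlgHom.id_apply, h0, map_add,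
        map_mul, MvPolynomial.aeval_C, MvPolynomial.algebraMap_eq, h1]
      rw [add_assoc, ← add_mul, ← map_add, CharTwo.add_self_eq_zero, map_zero, zero_mul,
        add_zero]
    · simp only [AlgHom.comp_apply, MvPolynomial.aeval_X, AlgHom.id_apply, subsFun,
        if_neg hi]
  have := congrFun (congrArg (fun f => f.toFun) hcomp) P
  simpa using this

lemma phiFun_phiFun [CharP k 2] (s : k) (F : MvPowerSeries (Fin 3) k) :
    phiFun s (phiFun s F) = F := by
  ext n
  rw [coeff_phiFun_self]
  set N := bnd n.degree with hN
  have hNle : ∀ m : Fin 3 →₀ ℕ, m.degree ≤ n.degree → m < N := fun m hm => lt_bnd hm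
  have key : MvPolynomial.coeff n (MvPolynomial.aeval (subsFun s)
      (trunc k N (phiFun s F) -
        MvPolynomial.aeval (subsFun s) (trunc k N F))) = 0 := by
    apply coeff_aeval_subs_eq_zero
    intro d hd
    rw [MvPolynomial.coeff_sub, coeff_trunc, if_pos (hNle d (le_of_eq hd)), sub_eq_zero]
    exact coeff_phiFun s F d N (fun m hm => hNle m (le_trans hm (le_of_eq hd)))
  rw [map_sub, MvPolynomial.coeff_sub, sub_eq_zero] at key
  rw [key, aeval_subs_subs, coeff_trunc, if_pos (hNle n le_rfl)]

/-- The substitution as an algebra endomorphism of the power series ring. -/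
noncomputable def phiHom (s : k) :
    MvPowerSeries (Fin 3) k →ₐ[k] MvPowerSeries (Fin 3) k where
  toFun := phiFun s
  map_one' := phiFun_one s
  map_mul' := phiFun_mul s
  map_zero' := phiFun_zero s
  map_add' := phiFun_add s
  commutes' := fun r => by
    rw [MvPowerSeries.algebraMap_apply]
    simp only [Algebra.algebraMap_self, RingHom.id_apply]
    exact phiFun_C s r

/-- The substitution as an algebra automorphism (it is an involution in char 2). -/
noncomputable def phiAlg [CharP k 2] (s : k) :
    MvPowerSeries (Fin 3) k ≃ₐ[k] MvPowerSeries (Fin 3) k :=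
  AlgEquiv.ofAlgHom (phiHom s) (phiHom s)
    (AlgHom.ext fun F => phiFun_phiFun s F)
    (AlgHom.ext fun F => phiFun_phiFun s F)



lemma phiAlg_apply [CharP k 2] (s : k) (F : MvPowerSeries (Fin 3) k) :
    phiAlg s F = phiFun s F := rfl

/-- original polynomial -/
noncomputable def fo (k : Type) [Field k] : MvPolynomial (Fin 3) k :=
  MvPolynomial.X 0 ^ 2 + MvPolynomial.X 1 ^ 3 + MvPolynomial.X 2 * MvPolynomial.X 1 ^ 2

lemma htwoP [CharP k 2] : (2 : MvPolynomial (Fin 3) k) = 0 := by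
  have h2 : (2 : MvPolynomial (Fin 3) k) = MvPolynomial.C (2 : k) := by
    rw [map_ofNat]
  rw [h2, CharTwo.two_eq_zero, map_zero]

lemma translate_expand (a b c : k) :
    translatePoly ![a, b, c] (fo k) =
      (MvPolynomial.X 0 + MvPolynomial.C a) ^ 2 + (MvPolynomial.X 1 + MvPolynomial.C b) ^ 3 +
        (MvPolynomial.X 2 + MvPolynomial.C c) * (MvPolynomial.X 1 + MvPolynomial.C b) ^ 2 := by
  unfold translatePoly fo
  simp [map_add, map_mul, map_pow, MvPolynomial.aeval_X, Matrix.cons_val_zero,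
    Matrix.cons_val_one, Matrix.head_cons]

/-- The structure of the translated polynomial in characteristic two. -/
lemma ft_id [CharP k 2] (a b c : k) (habc : a ^ 2 + b ^ 3 + c * b ^ 2 = 0) :
    translatePoly ![a, b, c] (fo k) =
      (MvPolynomial.X 0 ^ 2 + MvPolynomial.X 1 ^ 3 +
        (MvPolynomial.C b + MvPolynomial.C c) * MvPolynomial.X 1 ^ 2 +
        MvPolynomial.X 2 * MvPolynomial.X 1 ^ 2) +
      MvPolynomial.C (b ^ 2) * MvPolynomial.X 1 + MvPolynomial.C (b ^ 2) * MvPolynomial.X 2 := by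
  rw [translate_expand]
  have hCconst : (MvPolynomial.C a : MvPolynomial (Fin 3) k) ^ 2 + MvPolynomial.C b ^ 3 +
      MvPolynomial.C c * MvPolynomial.C b ^ 2 = 0 := by
    rw [← map_pow, ← map_pow, ← map_pow, ← map_mul, ← map_add, ← map_add, habc, map_zero]
  have hb2 : (MvPolynomial.C (b ^ 2) : MvPolynomial (Fin 3) k) = MvPolynomial.C b ^ 2 :=
    map_pow _ _ _
  rw [hb2]
  linear_combination hCconst + htwoP (k := k) * (MvPolynomial.C a * MvPolynomial.X 0 +
    MvPolynomial.C b * MvPolynomial.X 1 ^ 2 + MvPolynomial.C b ^ 2 * MvPolynomial.X 1 +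
    MvPolynomial.C b * MvPolynomial.C c * MvPolynomial.X 1 +
    MvPolynomial.C b * MvPolynomial.X 1 * MvPolynomial.X 2)

/-- With `a = b = 0` and `s ^ 2 = c`, the substitution `x ↦ x + s y` carries the
translated polynomial back to the original one. -/
lemma subs_translate [CharP k 2] (c s : k) (hs : s ^ 2 = c) :
    MvPolynomial.aeval (subsFun s) (translatePoly ![(0 : k), 0, c] (fo k)) = fo k := by
  rw [translate_expand]
  have h0 : subsFun s (0 : Fin 3) =
      MvPolynomial.X 0 + MvPolynomial.C s * MvPolynomial.X 1 := if_pos rfl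
  have h1 : subsFun s (1 : Fin 3) = MvPolynomial.X 1 := if_neg (by decide)
  have h2 : subsFun s (2 : Fin 3) = MvPolynomial.X 2 := if_neg (by decide)
  simp only [map_add, map_mul, map_pow, MvPolynomial.aeval_X, h0, h1, h2, map_zero,
    MvPolynomial.aeval_C, MvPolynomial.algebraMap_eq, MvPolynomial.C_0, add_zero]
  have hsC : (MvPolynomial.C s : MvPolynomial (Fin 3) k) ^ 2 = MvPolynomial.C c := by
    rw [← map_pow, hs]
  unfold fo
  linear_combination hsC * MvPolynomial.X 1 ^ 2 + htwoP (k := k) * (MvPolynomial.C s *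
    MvPolynomial.X 0 * MvPolynomial.X 1 + MvPolynomial.C c * MvPolynomial.X 1 ^ 2)


lemma coeff_single_C_mul_X (α : k) (i j : Fin 3) :
    coeff (R := k) (Finsupp.single j 1) (C (σ := Fin 3) (R := k) α * X i) = if j = i then α else 0 := by
  classical
  rw [coeff_C_mul, coeff_X]
  by_cases h : j = i
  · subst h; simp
  · rw [if_neg (fun hh => h (Finsupp.single_left_injective one_ne_zero hh)), mul_zero,
      if_neg h]

lemma isUnit_mk_iff {f W : MvPowerSeries (Fin 3) k}
    (hf : constantCoeff (σ := Fin 3) (R := k) f = 0) :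
    IsUnit (Ideal.Quotient.mk (Ideal.span {f}) W) ↔ IsUnit W := by
  constructor
  · intro h
    obtain ⟨v, hv⟩ := isUnit_iff_exists_inv.mp h
    obtain ⟨V, rfl⟩ := Ideal.Quotient.mk_surjective v
    rw [← map_mul] at hv
    have hmem : W * V - 1 ∈ Ideal.span {f} := by
      have h1 : Ideal.Quotient.mk (Ideal.span {f}) (W * V) =
          Ideal.Quotient.mk (Ideal.span {f}) 1 := by rw [map_one]; exact hv
      exact Ideal.Quotient.eq.mp h1
    obtain ⟨G, hG⟩ := Ideal.mem_span_singleton'.mp hmem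
    have hc : constantCoeff (σ := Fin 3) (R := k) W * constantCoeff (σ := Fin 3) (R := k) V = 1 := by
      have := congrArg (constantCoeff (σ := Fin 3) (R := k)) hG
      rw [map_mul, hf, mul_zero, map_sub, map_mul, map_one] at this
      linear_combination -this
    exact isUnit_iff_constantCoeff.mpr (IsUnit.of_mul_eq_one _ hc)
  · exact fun h => h.map _

/-- Transfer of maximal-ideal elements along an algebra equivalence of quotients. -/
lemma transfer {f₁ f₂ : MvPowerSeries (Fin 3) k}
    (hf₁ : constantCoeff (σ := Fin 3) (R := k) f₁ = 0) (hf₂ : constantCoeff (σ := Fin 3) (R := k) f₂ = 0)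
    (e : (MvPowerSeries (Fin 3) k ⧸ Ideal.span {f₁}) ≃ₐ[k]
         (MvPowerSeries (Fin 3) k ⧸ Ideal.span {f₂}))
    {W : MvPowerSeries (Fin 3) k} (hW : W ∈ MM k) :
    ∃ W' ∈ MM k, Ideal.Quotient.mk (Ideal.span {f₂}) W' =
      e (Ideal.Quotient.mk (Ideal.span {f₁}) W) := by
  have hnx : ¬ IsUnit (e (Ideal.Quotient.mk (Ideal.span {f₁}) W)) := by
    intro h
    have h1 : IsUnit (Ideal.Quotient.mk (Ideal.span {f₁}) W) := by
      have := h.map e.symm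
      rwa [AlgEquiv.symm_apply_apply] at this
    have h2 : IsUnit W := (isUnit_mk_iff hf₁).mp h1
    have h3 := isUnit_constantCoeff W h2
    rw [mem_MM.mp hW] at h3
    exact not_isUnit_zero h3
  obtain ⟨W', hW'⟩ := Ideal.Quotient.mk_surjective (e (Ideal.Quotient.mk (Ideal.span {f₁}) W))
  refine ⟨W', mem_MM.mpr ?_, hW'⟩
  by_contra hc
  exact hnx (hW' ▸ ((isUnit_mk_iff hf₂).mpr (isUnit_iff_constantCoeff.mpr (Ne.isUnit hc))))

set_option maxHeartbeats 1000000 in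
theorem forward_core [CharP k 2] (a b c : k) (habc : a ^ 2 + b ^ 3 + c * b ^ 2 = 0)
    (hb : b ≠ 0)
    (e : (MvPowerSeries (Fin 3) k ⧸
            Ideal.span {((translatePoly ![a, b, c] (fo k) : MvPolynomial (Fin 3) k) :
              MvPowerSeries (Fin 3) k)}) ≃ₐ[k]
         (MvPowerSeries (Fin 3) k ⧸
            Ideal.span {((fo k : MvPolynomial (Fin 3) k) : MvPowerSeries (Fin 3) k)})) :
    False := by
  classical
  set ftS : MvPowerSeries (Fin 3) k := ((translatePoly ![a, b, c] (fo k) :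
    MvPolynomial (Fin 3) k) : MvPowerSeries (Fin 3) k) with hftSdef
  set foS : MvPowerSeries (Fin 3) k := ((fo k : MvPolynomial (Fin 3) k) :
    MvPowerSeries (Fin 3) k) with hfoSdef
  set gS : MvPowerSeries (Fin 3) k :=
    X 0 * X 0 + X 1 * (X 1 * X 1) + ((C (σ := Fin 3) (R := k) b + C (σ := Fin 3) (R := k) c) * X 1) * X 1 +
      (X 2 * X 1) * X 1 with hgSdef
  have haddself : ∀ F : MvPowerSeries (Fin 3) k, F + F = 0 := fun F => by
    rw [← two_smul k F, CharTwo.two_eq_zero, zero_smul]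
  -- the coerced identity
  have hftS : ftS = gS + C (σ := Fin 3) (R := k) (b ^ 2) * X 1 + C (σ := Fin 3) (R := k) (b ^ 2) * X 2 := by
    rw [hftSdef, ft_id a b c habc]
    push_cast
    rw [hgSdef]
    ring
  have hgS_mem : gS ∈ (MM k) ^ 2 := by
    rw [hgSdef]
    refine add_mem (add_mem (add_mem ?_ ?_) ?_) ?_ <;>
      refine mul_mem_MM_sq (by simp) (by simp)
  have hfoS_mem : foS ∈ (MM k) ^ 2 := by
    have hfoS : foS = X 0 * X 0 + X 1 * X 1 * X 1 + X 2 * X 1 * X 1 := by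
      rw [hfoSdef]; unfold fo; push_cast; ring
    rw [hfoS]
    exact add_mem (add_mem (mul_mem_MM_sq (by simp) (by simp))
      (mul_mem_MM_sq (by simp [map_mul]) (by simp)))
      (mul_mem_MM_sq (by simp [map_mul]) (by simp))
  have hcft : constantCoeff (σ := Fin 3) (R := k) ftS = 0 := by
    rw [hftS, map_add, map_add, MM_sq_constantCoeff hgS_mem, map_mul, map_mul]
    simp
  have hcfo : constantCoeff (σ := Fin 3) (R := k) foS = 0 := MM_sq_constantCoeff hfoS_mem
  set It := Ideal.span {ftS} with hItdef
  set Io := Ideal.span {foS} with hIodef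
  set mkt := Ideal.Quotient.mk It with hmktdef
  set mko := Ideal.Quotient.mk Io with hmkodef
  set Nt := Ideal.map mkt (MM k) with hNtdef
  set No := Ideal.map mko (MM k) with hNodef
  -- e maps Nt into No, and Nt² into No²
  have eNt : ∀ x ∈ Nt, e x ∈ No := by
    intro x hx
    obtain ⟨W, hW, rfl⟩ := Ideal.mem_map_iff_of_surjective _ Ideal.Quotient.mk_surjective |>.mp hx
    obtain ⟨W', hW', hW'eq⟩ := transfer hcft hcfo e hW
    rw [← hW'eq]
    exact Ideal.mem_map_of_mem _ hW'
  have eNtsq : ∀ x ∈ Nt ^ 2, e x ∈ No ^ 2 := by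
    intro x hx
    rw [pow_two] at hx
    rw [pow_two]
    refine Submodule.mul_induction_on hx ?_ ?_
    · intro m hm n hn
      rw [map_mul]
      exact Ideal.mul_mem_mul (eNt m hm) (eNt n hn)
    · intro x y hx hy
      rw [map_add]
      exact add_mem hx hy
  -- two-generation property in the translated quotient
  have hP : ∀ x ∈ Nt, ∃ α β : k,
      x - mkt (C (σ := Fin 3) (R := k) α * X 0) - mkt (C (σ := Fin 3) (R := k) β * X 1) ∈ Nt ^ 2 := by
    intro x hx
    obtain ⟨W, hW, rfl⟩ := Ideal.mem_map_iff_of_surjective _ Ideal.Quotient.mk_surjective |>.mp hx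
    set l0 := coeff (R := k) (Finsupp.single 0 1) W with hl0
    set l1 := coeff (R := k) (Finsupp.single 1 1) W with hl1
    set l2 := coeff (R := k) (Finsupp.single 2 1) W with hl2
    have hW' : W - (C (σ := Fin 3) (R := k) l0 * X 0 + C (σ := Fin 3) (R := k) l1 * X 1 + C (σ := Fin 3) (R := k) l2 * X 2) ∈
        (MM k) ^ 2 := by
      refine ord2_mem_MM_sq ?_ ?_
      · rw [map_sub, mem_MM.mp hW, map_add, map_add, map_mul, map_mul, map_mul]
        simp
      · intro j
        rw [map_sub, map_add, map_add, coeff_single_C_mul_X, coeff_single_C_mul_X,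
          coeff_single_C_mul_X]
        fin_cases j <;> simp [hl0, hl1, hl2]
    refine ⟨l0, l1 + l2, ?_⟩
    have key : mkt W - mkt (C (σ := Fin 3) (R := k) l0 * X 0) - mkt (C (σ := Fin 3) (R := k) (l1 + l2) * X 1) =
        mkt (W - (C (σ := Fin 3) (R := k) l0 * X 0 + C (σ := Fin 3) (R := k) l1 * X 1 + C (σ := Fin 3) (R := k) l2 * X 2)) +
          mkt (C (σ := Fin 3) (R := k) l2 * (X 1 + X 2)) := by
      rw [← map_add, ← map_sub, ← map_sub]
      congr 1
      rw [map_add]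
      linear_combination -(haddself (C (σ := Fin 3) (R := k) l2 * X 1))
    rw [key]
    refine add_mem ?_ ?_
    · rw [hNtdef, ← Ideal.map_pow]
      exact Ideal.mem_map_of_mem _ hW'
    · have hgS_in : mkt gS ∈ Nt ^ 2 := by
        rw [hNtdef, ← Ideal.map_pow]
        exact Ideal.mem_map_of_mem _ hgS_mem
      have hX12 : (X 1 + X 2 : MvPowerSeries (Fin 3) k) =
          C (σ := Fin 3) (R := k) ((b ^ 2)⁻¹) * (ftS - gS) := by
        have hdiff : ftS - gS = C (σ := Fin 3) (R := k) (b ^ 2) * (X 1 + X 2) := by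
          rw [hftS]; ring
        rw [hdiff, ← mul_assoc, ← map_mul, inv_mul_cancel₀ (pow_ne_zero 2 hb), map_one,
          one_mul]
      have hft0 : mkt ftS = 0 :=
        Ideal.Quotient.eq_zero_iff_mem.mpr (Ideal.mem_span_singleton_self ftS)
      have : mkt (X 1 + X 2) ∈ Nt ^ 2 := by
        rw [hX12, map_mul, map_sub, hft0, zero_sub]
        exact Ideal.mul_mem_left _ _ (neg_mem hgS_in)
      rw [map_mul]
      have hXmk : mkt (X 1 + X 2) = mkt (X 1) + mkt (X 2) := map_add _ _ _
      rw [map_add] at this ⊢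
      exact Ideal.mul_mem_left _ _ this
  -- transport the three coordinates
  obtain ⟨U, hU, hUeq⟩ := transfer hcft hcfo e (X_mem_MM 0)
  obtain ⟨V, hV, hVeq⟩ := transfer hcft hcfo e (X_mem_MM 1)
  set p : Fin 3 → k := fun j => coeff (R := k) (Finsupp.single j 1) U with hp
  set q : Fin 3 → k := fun j => coeff (R := k) (Finsupp.single j 1) V with hq
  have hXc : ∀ i j : Fin 3, coeff (R := k) (Finsupp.single j 1) (X i : MvPowerSeries (Fin 3) k) =
      if j = i then 1 else 0 := by
    intro i j
    rw [show (X i : MvPowerSeries (Fin 3) k) = C (σ := Fin 3) (R := k) 1 * X i by rw [map_one, one_mul]]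
    exact coeff_single_C_mul_X 1 i j
  have hCmove : ∀ (α : k) (Z ZU : MvPowerSeries (Fin 3) k),
      mko ZU = e (mkt Z) → e (mkt (C (σ := Fin 3) (R := k) α * Z)) = mko (C (σ := Fin 3) (R := k) α * ZU) := by
    intro α Z ZU hZ
    have hCalg : (C (σ := Fin 3) (R := k) α : MvPowerSeries (Fin 3) k) =
        algebraMap k (MvPowerSeries (Fin 3) k) α := by
      rw [MvPowerSeries.algebraMap_apply]
      simp
    rw [hCalg, map_mul, map_mul, map_mul, Ideal.Quotient.mk_algebraMap,
      Ideal.Quotient.mk_algebraMap, AlgEquiv.commutes, ← hZ]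
  have step : ∀ i : Fin 3, ∃ α β : k,
      ∀ j : Fin 3, (if j = i then (1 : k) else 0) = α * p j + β * q j := by
    intro i
    obtain ⟨Wi, hWi, hWieq⟩ := transfer hcfo hcft e.symm (X_mem_MM i)
    obtain ⟨α, β, hαβ⟩ := hP (mkt Wi) (Ideal.mem_map_of_mem _ hWi)
    have hei : e (mkt Wi) = mko (X i) := by rw [hWieq, AlgEquiv.apply_symm_apply]
    have h4 : mko (X i) - mko (C (σ := Fin 3) (R := k) α * U) - mko (C (σ := Fin 3) (R := k) β * V) ∈ No ^ 2 := by
      have h2 := eNtsq _ hαβ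
      rwa [map_sub, map_sub, hei, hCmove α (X 0) U hUeq, hCmove β (X 1) V hVeq] at h2
    have hmap : No ^ 2 = Ideal.map mko ((MM k) ^ 2) := by rw [hNodef, Ideal.map_pow]
    rw [← map_sub, ← map_sub, hmap] at h4
    obtain ⟨Wsq, hWsq, hWsqeq⟩ :=
      (Ideal.mem_map_iff_of_surjective _ Ideal.Quotient.mk_surjective).mp h4
    have hdiffmem : Wsq - (X i - C (σ := Fin 3) (R := k) α * U - C (σ := Fin 3) (R := k) β * V) ∈ Io :=
      Ideal.Quotient.eq.mp hWsqeq
    obtain ⟨G, hG⟩ := Ideal.mem_span_singleton'.mp hdiffmem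
    refine ⟨α, β, fun j => ?_⟩
    have hcoeff := congrArg (fun F => coeff (R := k) (Finsupp.single j 1) F) hG
    simp only [map_sub] at hcoeff
    rw [MM_sq_coeff_single (Ideal.mul_mem_left _ G hfoS_mem) j,
      MM_sq_coeff_single hWsq j, hXc i j, coeff_C_mul, coeff_C_mul] at hcoeff
    rw [hp, hq]
    simp only []
    linear_combination hcoeff
  choose A B hAB using step
  set Mmat : Matrix (Fin 3) (Fin 3) k := Matrix.of (fun i j => A i * p j + B i * q j)
    with hMmat
  have hmat : (1 : Matrix (Fin 3) (Fin 3) k) = Mmat := by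
    ext i j
    rw [Matrix.one_apply, hMmat, Matrix.of_apply, ← hAB i j]
    by_cases hij : i = j
    · simp [hij]
    · rw [if_neg hij, if_neg (fun hh => hij hh.symm)]
  have hdet := congrArg Matrix.det hmat
  rw [Matrix.det_one, Matrix.det_fin_three] at hdet
  simp only [hMmat, Matrix.of_apply] at hdet
  have hzero : (1 : k) = 0 := by rw [hdet]; ring
  exact one_ne_zero hzero


theorem backward_core [CharP k 2] [IsAlgClosed k] (c : k) :
    Nonempty
      ((MvPowerSeries (Fin 3) k ⧸
          Ideal.span {((translatePoly ![(0 : k), 0, c] (fo k) : MvPolynomial (Fin 3) k) :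
            MvPowerSeries (Fin 3) k)}) ≃ₐ[k]
       (MvPowerSeries (Fin 3) k ⧸
          Ideal.span {((fo k : MvPolynomial (Fin 3) k) : MvPowerSeries (Fin 3) k)})) := by
  obtain ⟨s, hs⟩ := IsAlgClosed.exists_pow_nat_eq c (n := 2) (by norm_num)
  refine ⟨Ideal.quotientEquivAlg _ _ (phiAlg s) ?_⟩
  have h1 := phiFun_coe s (translatePoly ![(0 : k), 0, c] (fo k))
  rw [subs_translate c s hs] at h1
  have h2 : ((phiAlg s : MvPowerSeries (Fin 3) k ≃ₐ[k] MvPowerSeries (Fin 3) k) :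
      MvPowerSeries (Fin 3) k →+* MvPowerSeries (Fin 3) k)
        ((translatePoly ![(0 : k), 0, c] (fo k) : MvPolynomial (Fin 3) k) :
          MvPowerSeries (Fin 3) k) = ((fo k : MvPolynomial (Fin 3) k) :
          MvPowerSeries (Fin 3) k) := by
    show phiAlg s _ = _
    rw [phiAlg_apply, h1]
  rw [Ideal.map_span, Set.image_singleton, h2]


end Stmt19Aux

/-- For `f̃ = x² + y³ + z·y²` over an algebraically closed field of characteristic `2`
and a point `(a,b,c)` on `V(f̃)`, the complete local rings `k⟦x,y,z⟧/(f̃(x+a, y+b, z+c))`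
and `k⟦x,y,z⟧/(f̃)` are isomorphic as `k`-algebras iff `a = 0` and `b = 0`: the
isosingular locus at the origin is exactly the `z`-axis. -/
theorem stmt_19 (k : Type) [Field k] [IsAlgClosed k] [CharP k 2]
    (a b c : k) (habc : a ^ 2 + b ^ 3 + c * b ^ 2 = 0) :
    Nonempty
      ((MvPowerSeries (Fin 3) k ⧸
          Ideal.span {((translatePoly ![a, b, c]
              (MvPolynomial.X 0 ^ 2 + MvPolynomial.X 1 ^ 3 +
                MvPolynomial.X 2 * MvPolynomial.X 1 ^ 2) :
            MvPolynomial (Fin 3) k) : MvPowerSeries (Fin 3) k)}) ≃ₐ[k]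
       (MvPowerSeries (Fin 3) k ⧸
          Ideal.span {((MvPolynomial.X 0 ^ 2 + MvPolynomial.X 1 ^ 3 +
              MvPolynomial.X 2 * MvPolynomial.X 1 ^ 2 :
            MvPolynomial (Fin 3) k) : MvPowerSeries (Fin 3) k)})) ↔
      a = 0 ∧ b = 0 := by
  constructor
  · rintro ⟨e⟩
    by_cases hb : b = 0
    · refine ⟨?_, hb⟩
      subst hb
      have ha2 : a ^ 2 = 0 := by linear_combination habc
      exact pow_eq_zero_iff (two_ne_zero) |>.mp ha2
    · exact (Stmt19Aux.forward_core a b c habc hb e).elim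
  · rintro ⟨rfl, rfl⟩
    exact Stmt19Aux.backward_core c
end
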